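/- arXiv:2004.07298 — 2 statements merged into one kernel-verified Lean document; each statement's English description precedes it below -/
import Mathlib

section
/- Assume: (Gibbs/quasi-independence) there is K ≥ 1 such that μ(C' ∩ σ^{−n} C'') ≤ K μ(C') μ(C'') for every n ≥ 1, every cylinder C' of length n and every cylinder C''; (bounded distortion) there is R > 0 such that for every N ≥ 1 and every cylinder C of length N, the diameter of τ_N(C) in ℝ^d is at most R; (large deviations) there are C₂, c₂ > 0 with μ(|τ_N| > L) ≤ C₂ e^{−c₂ L²/N} for all N ≥ 1 and L > 0; (anticoncentration) μ(τ_N ∈ 𝒬) ≤ C₂ N^{−d/2} for every N ≥ 1 and every unit cube 𝒬 ⊂ ℝ^d. Then there are constants C₃, c₃ > 0 such that for every N ≥ 1 and every unit cube 𝒬 ⊂ ℝ^d centered at z, μ(τ_N ∈ 𝒬) ≤ C₃ N^{−d/2} e^{−c₃ |z|²/N}. -/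
open MeasureTheory Filter Topology

noncomputable section

/-- The left shift on `Σ = 𝒜^ℕ`. -/
def shift {A : Type*} : (ℕ → A) → (ℕ → A) := fun ω n => ω (n + 1)

/-- The cylinder of length `n` determined by the word `w`. -/
def cylinder {A : Type*} (n : ℕ) (w : ℕ → A) : Set (ℕ → A) :=
  {ω | ∀ i < n, ω i = w i}

/-- Birkhoff sums `τ_N = ∑_{n<N} τ ∘ σ^n` of an `ℝ^d`-valued observable over the shift. -/
def birkhoffShift {A : Type*} {d : ℕ} (τ : (ℕ → A) → EuclideanSpace ℝ (Fin d))
    (N : ℕ) (ω : ℕ → A) : EuclideanSpace ℝ (Fin d) :=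
  ∑ n ∈ Finset.range N, τ (shift^[n] ω)

/-- The closed unit cube in `ℝ^d` centered at `z`. -/
def unitCubeAt {d : ℕ} (z : EuclideanSpace ℝ (Fin d)) : Set (EuclideanSpace ℝ (Fin d)) :=
  {t | ∀ i, z i - 1 / 2 ≤ t i ∧ t i ≤ z i + 1 / 2}

/-- The closed unit cube in `ℝ^d` with corner `a`. -/
def unitCubeCorner {d : ℕ} (a : EuclideanSpace ℝ (Fin d)) : Set (EuclideanSpace ℝ (Fin d)) :=
  {t | ∀ i, a i ≤ t i ∧ t i ≤ a i + 1}

namespace Stmt18Aux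

theorem coord_le_norm {d : ℕ} (x : EuclideanSpace ℝ (Fin d)) (i : Fin d) : |x i| ≤ ‖x‖ := by
  rw [EuclideanSpace.norm_eq]
  simp only [Real.norm_eq_abs, sq_abs]
  rw [← Real.sqrt_sq_eq_abs]
  exact Real.sqrt_le_sqrt
    (Finset.single_le_sum (f := fun j => x j ^ 2) (fun j _ => sq_nonneg _) (Finset.mem_univ i))

theorem norm_le_sqrt_mul {d : ℕ} (x : EuclideanSpace ℝ (Fin d)) (c : ℝ) (hc : 0 ≤ c)
    (h : ∀ i, |x i| ≤ c) : ‖x‖ ≤ Real.sqrt d * c := by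
  rw [EuclideanSpace.norm_eq]
  simp only [Real.norm_eq_abs, sq_abs]
  have h1 : ∑ i, x i ^ 2 ≤ ∑ _i : Fin d, c ^ 2 := by
    apply Finset.sum_le_sum; intro i _
    calc x i ^ 2 = |x i| ^ 2 := (sq_abs _).symm
    _ ≤ c ^ 2 := pow_le_pow_left₀ (abs_nonneg _) (h i) 2
  calc Real.sqrt (∑ i, x i ^ 2) ≤ Real.sqrt (∑ _i : Fin d, c ^ 2) := Real.sqrt_le_sqrt h1
  _ = Real.sqrt (d * c ^ 2) := by simp [Finset.sum_const, mul_comm]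
  _ = Real.sqrt d * c := by rw [Real.sqrt_mul (by positivity), Real.sqrt_sq hc]

theorem bs_add {A : Type*} {d : ℕ} (τ : (ℕ → A) → EuclideanSpace ℝ (Fin d)) (n m : ℕ)
    (ω : ℕ → A) :
    birkhoffShift τ (n + m) ω = birkhoffShift τ n ω + birkhoffShift τ m (shift^[n] ω) := by
  unfold birkhoffShift
  rw [Finset.sum_range_add]
  congr 1
  refine Finset.sum_congr rfl fun k _ => ?_
  rw [add_comm n k, Function.iterate_add_apply]

theorem bs_norm_le {A : Type*} {d : ℕ} (τ : (ℕ → A) → EuclideanSpace ℝ (Fin d)) (M : ℝ)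
    (hM : ∀ ω, ‖τ ω‖ ≤ M) (N : ℕ) (ω : ℕ → A) : ‖birkhoffShift τ N ω‖ ≤ N * M := by
  calc ‖birkhoffShift τ N ω‖ ≤ ∑ n ∈ Finset.range N, ‖τ (shift^[n] ω)‖ :=
        norm_sum_le _ _
  _ ≤ ∑ _n ∈ Finset.range N, M := Finset.sum_le_sum fun n _ => hM _
  _ = N * M := by simp [Finset.sum_const, mul_comm]

theorem cyl_measurable {A : Type*} [MeasurableSpace A] [DiscreteMeasurableSpace A]
    (n : ℕ) (w : ℕ → A) : MeasurableSet (cylinder n w) := by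
  have h : cylinder n w = ⋂ i ∈ Finset.range n, (fun ω : ℕ → A => ω i) ⁻¹' {w i} := by
    ext ω; simp [_root_.cylinder]
  rw [h]
  apply Finset.measurableSet_biInter
  exact fun i _ => (measurable_pi_apply i) (MeasurableSet.singleton (w i))

variable {A : Type*} [Nonempty A]

/-- extension of a finite word to an infinite one -/
def wext (n : ℕ) (w : Fin n → A) : ℕ → A :=
  fun i => if h : i < n then w ⟨i, h⟩ else Classical.arbitrary A

theorem wext_mem (n : ℕ) (w : Fin n → A) : wext n w ∈ cylinder n (wext n w) :=
  fun _ _ => rfl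

theorem mem_wext_self (n : ℕ) (ω : ℕ → A) :
    ω ∈ cylinder n (wext n fun i : Fin n => ω i) := by
  intro i hi; simp [wext, hi]

theorem cyl_disjoint (n : ℕ) {w v : Fin n → A} (h : w ≠ v) :
    Disjoint (cylinder n (wext n w)) (cylinder n (wext n v)) := by
  rw [Set.disjoint_left]
  intro ω hw hv
  apply h
  funext i
  have h1 := hw i i.2
  have h2 := hv i i.2
  simp only [wext, i.2, dif_pos] at h1 h2
  rw [← h1, ← h2]

theorem cyl_pairwise (n : ℕ) (F : Finset (Fin n → A)) :
    (↑F : Set (Fin n → A)).PairwiseDisjoint (fun w => cylinder n (wext n w)) :=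
  fun _ _ _ _ h => cyl_disjoint n h

/-- the measure of a finite disjoint family of cylinders contained in `S` -/
theorem sum_cyl_le {A : Type*} [Nonempty A] [MeasurableSpace A] [DiscreteMeasurableSpace A]
    (μ : Measure (ℕ → A)) [IsProbabilityMeasure μ] (n : ℕ) (F : Finset (Fin n → A))
    (S : Set (ℕ → A)) (hS : ∀ w ∈ F, cylinder n (wext n w) ⊆ S) :
    ∑ w ∈ F, (μ (cylinder n (wext n w))).toReal ≤ (μ S).toReal := by
  rw [← ENNReal.toReal_sum (fun w _ => measure_ne_top μ _)]
  apply ENNReal.toReal_mono (measure_ne_top μ _)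
  rw [← measure_biUnion_finset (cyl_pairwise n F) (fun w _ => cyl_measurable n _)]
  exact measure_mono (Set.iUnion₂_subset hS)

theorem partition_le {A : Type*} [Nonempty A] [Fintype A] [MeasurableSpace A]
    (μ : Measure (ℕ → A)) (n : ℕ) (E : Set (ℕ → A)) :
    μ E ≤ ∑ w : Fin n → A, μ (E ∩ cylinder n (wext n w)) := by
  calc μ E ≤ μ (⋃ w ∈ (Finset.univ : Finset (Fin n → A)), E ∩ cylinder n (wext n w)) := by
        apply measure_mono
        intro ω hω
        exact Set.mem_biUnion (Finset.mem_univ _) ⟨hω, mem_wext_self n ω⟩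
  _ ≤ _ := measure_biUnion_finset_le _ _

theorem corner_eq_at {d : ℕ} (a : EuclideanSpace ℝ (Fin d)) :
    unitCubeCorner a = unitCubeAt (WithLp.toLp 2 (fun i => a i + 1/2) : EuclideanSpace ℝ (Fin d)) := by
  ext t
  constructor <;> intro h i <;> obtain ⟨h1, h2⟩ := h i <;> constructor <;>
    simp only [PiLp.toLp_apply] <;> linarith

/-- covering of a ball of radius `r` by `⌈2r⌉₊ ^ d` unit cubes -/
theorem ball_subset_cubes {d : ℕ} (z' : EuclideanSpace ℝ (Fin d)) (r : ℝ) (hr : 0 < r) :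
    {t : EuclideanSpace ℝ (Fin d) | ‖t - z'‖ ≤ r} ⊆
      ⋃ j : Fin d → Fin ⌈2*r⌉₊,
        unitCubeCorner (WithLp.toLp 2 (fun i => z' i - r + (j i : ℝ)) : EuclideanSpace ℝ (Fin d)) := by
  intro t ht
  have hk1 : 1 ≤ ⌈2*r⌉₊ := Nat.one_le_iff_ne_zero.mpr (by positivity)
  have hcoord : ∀ i, |t i - z' i| ≤ r := fun i => by
    have := coord_le_norm (t - z') i
    simp only [show (t - z') i = t i - z' i from rfl] at this
    exact this.trans ht
  set k := ⌈2*r⌉₊ with hk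
  refine Set.mem_iUnion.mpr ⟨fun i => ⟨min ⌊t i - z' i + r⌋₊ (k-1), ?_⟩, fun i => ?_⟩
  · exact lt_of_le_of_lt (min_le_right _ _) (Nat.sub_lt hk1 one_pos)
  · -- membership in the cube
    simp only [PiLp.toLp_apply]
    set s := t i - z' i + r with hs
    have hs0 : 0 ≤ s := by have := (abs_le.mp (hcoord i)).1; simp [hs]; linarith
    have hs2r : s ≤ 2*r := by have := (abs_le.mp (hcoord i)).2; simp [hs]; linarith
    have hsk : s ≤ (k:ℝ) := hs2r.trans (Nat.le_ceil _)
    rcases lt_or_ge ⌊s⌋₊ k with hc | hc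
    · have hmin : min ⌊s⌋₊ (k-1) = ⌊s⌋₊ := min_eq_left (Nat.le_sub_one_of_lt hc)
      rw [hmin]
      constructor
      · have := Nat.floor_le hs0; simp only [hs] at this ⊢; linarith
      · have := (Nat.lt_floor_add_one s).le; simp only [hs] at this ⊢; linarith
    · have hmin : min ⌊s⌋₊ (k-1) = k - 1 := min_eq_right (le_trans (Nat.sub_le k 1) hc)
      rw [hmin]
      have hks : (k:ℝ) ≤ s := le_trans (by exact_mod_cast Nat.cast_le.mpr hc : (k:ℝ) ≤ ⌊s⌋₊)
        (Nat.floor_le hs0)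
      have hcast : ((k-1 : ℕ) : ℝ) = (k:ℝ) - 1 := by
        rw [Nat.cast_sub hk1]; norm_num
      rw [hcast]
      constructor
      · simp only [hs] at hks ⊢; linarith
      · simp only [hs] at hsk ⊢; linarith


theorem gibbs_ext {A : Type*} [Nonempty A] [MeasurableSpace A] [DiscreteMeasurableSpace A]
    (μ : Measure (ℕ → A)) {d : ℕ} (τ : (ℕ → A) → EuclideanSpace ℝ (Fin d))
    (K R : ℝ)
    (hGibbs : ∀ n : ℕ, 1 ≤ n → ∀ w : ℕ → A, ∀ n' : ℕ, ∀ w' : ℕ → A,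
      μ (cylinder n w ∩ shift^[n] ⁻¹' cylinder n' w')
        ≤ ENNReal.ofReal K * μ (cylinder n w) * μ (cylinder n' w'))
    (hdist : ∀ N : ℕ, 1 ≤ N → ∀ w : ℕ → A, ∀ ω ∈ cylinder N w, ∀ ω' ∈ cylinder N w,
      ‖birkhoffShift τ N ω - birkhoffShift τ N ω'‖ ≤ R)
    (n m : ℕ) (hn : 1 ≤ n) (hm : 1 ≤ m) (w : ℕ → A) [Fintype A]
    (S S' : Set (EuclideanSpace ℝ (Fin d)))
    (hSS' : ∀ x y, x ∈ S → ‖y - x‖ ≤ R → y ∈ S') :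
    μ (cylinder n w ∩ shift^[n] ⁻¹' {ω | birkhoffShift τ m ω ∈ S})
      ≤ ENNReal.ofReal K * μ (cylinder n w) * μ {ω | birkhoffShift τ m ω ∈ S'} := by
  classical
  set E := {ω | birkhoffShift τ m ω ∈ S} with hE
  set Sel : Finset (Fin m → A) :=
    Finset.univ.filter (fun v => ((_root_.cylinder m (wext m v)) ∩ E).Nonempty) with hSel
  have step1 : cylinder n w ∩ shift^[n] ⁻¹' E ⊆
      ⋃ v ∈ Sel, cylinder n w ∩ shift^[n] ⁻¹' (cylinder m (wext m v)) := by
    rintro ω ⟨hωc, hωE⟩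
    refine Set.mem_biUnion (Finset.mem_filter.mpr ⟨Finset.mem_univ _, ?_⟩)
      ⟨hωc, mem_wext_self m (shift^[n] ω)⟩
    exact ⟨shift^[n] ω, mem_wext_self m _, hωE⟩
  calc μ (cylinder n w ∩ shift^[n] ⁻¹' E)
      ≤ μ (⋃ v ∈ Sel, cylinder n w ∩ shift^[n] ⁻¹' (cylinder m (wext m v))) :=
        measure_mono step1
    _ ≤ ∑ v ∈ Sel, μ (cylinder n w ∩ shift^[n] ⁻¹' (cylinder m (wext m v))) :=
        measure_biUnion_finset_le _ _
    _ ≤ ∑ v ∈ Sel, ENNReal.ofReal K * μ (cylinder n w) * μ (cylinder m (wext m v)) :=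
        Finset.sum_le_sum fun v _ => hGibbs n hn w m _
    _ = ENNReal.ofReal K * μ (cylinder n w) * ∑ v ∈ Sel, μ (cylinder m (wext m v)) := by
        rw [Finset.mul_sum]
    _ = ENNReal.ofReal K * μ (cylinder n w) * μ (⋃ v ∈ Sel, cylinder m (wext m v)) := by
        rw [measure_biUnion_finset (cyl_pairwise m Sel) (fun v _ => cyl_measurable m _)]
    _ ≤ ENNReal.ofReal K * μ (cylinder n w) * μ {ω | birkhoffShift τ m ω ∈ S'} := by
        apply mul_le_mul_right
        apply measure_mono
        apply Set.iUnion₂_subset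
        intro v hv ω hω
        obtain ⟨ω₀, hω₀c, hω₀E⟩ := (Finset.mem_filter.mp hv).2
        exact hSS' _ _ hω₀E (hdist m hm (wext m v) ω hω ω₀ hω₀c)


theorem rpow_half_trick (N m : ℕ) (hm : (N:ℝ)/2 ≤ m) (hN : 0 < N) (d : ℕ) :
    (m:ℝ) ^ (-(d:ℝ)/2) ≤ (2:ℝ)^((d:ℝ)/2) * (N:ℝ)^(-(d:ℝ)/2) := by
  have hN0 : (0:ℝ) < N := by exact_mod_cast hN
  have h1 : ((N:ℝ)/2) ^ (-(d:ℝ)/2) = (2:ℝ)^((d:ℝ)/2) * (N:ℝ)^(-(d:ℝ)/2) := by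
    rw [Real.div_rpow hN0.le (by norm_num)]
    rw [show (-(d:ℝ)/2) = -((d:ℝ)/2) by ring, Real.rpow_neg (by norm_num : (0:ℝ) ≤ 2)]
    field_simp
  rw [← h1]
  exact Real.rpow_le_rpow_of_nonpos (by positivity) hm
    (div_nonpos_of_nonpos_of_nonneg (neg_nonpos_of_nonneg (Nat.cast_nonneg d)) (by norm_num))

end Stmt18Aux

set_option maxHeartbeats 2000000 in
/-- Lemma A.3 of the paper: for a shift-invariant measure on a subshift with the Gibbs
(quasi-independence) property and a cocycle with bounded distortion on cylinders,
subgaussian large deviations and `N^{-d/2}` anticoncentration imply the anticoncentration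
large deviation bound `μ(τ_N ∈ 𝒬) ≤ C₃ N^{-d/2} e^{-c₃|z|²/N}` for unit cubes centered
at `z`. -/
theorem stmt_18
    {A : Type*} [Fintype A] [MeasurableSpace A] [DiscreteMeasurableSpace A]
    (μ : Measure (ℕ → A)) [IsProbabilityMeasure μ]
    (hshift : MeasurePreserving (shift : (ℕ → A) → ℕ → A) μ μ)
    {d : ℕ}
    (τ : (ℕ → A) → EuclideanSpace ℝ (Fin d)) (hτm : Measurable τ)
    (hτb : ∃ M, ∀ ω, ‖τ ω‖ ≤ M)
    (K : ℝ) (hK : 1 ≤ K)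
    -- Gibbs / quasi-independence property
    (hGibbs : ∀ n : ℕ, 1 ≤ n → ∀ w : ℕ → A, ∀ n' : ℕ, ∀ w' : ℕ → A,
      μ (cylinder n w ∩ shift^[n] ⁻¹' cylinder n' w')
        ≤ ENNReal.ofReal K * μ (cylinder n w) * μ (cylinder n' w'))
    (R : ℝ) (hR : 0 < R)
    -- bounded distortion: τ_N has diameter ≤ R on length-N cylinders
    (hdist : ∀ N : ℕ, 1 ≤ N → ∀ w : ℕ → A, ∀ ω ∈ cylinder N w, ∀ ω' ∈ cylinder N w,
      ‖birkhoffShift τ N ω - birkhoffShift τ N ω'‖ ≤ R)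
    (C₂ c₂ : ℝ) (hC₂ : 0 < C₂) (hc₂ : 0 < c₂)
    -- large deviations
    (hLD : ∀ N : ℕ, 1 ≤ N → ∀ L : ℝ, 0 < L →
      (μ {ω | L < ‖birkhoffShift τ N ω‖}).toReal ≤ C₂ * Real.exp (-c₂ * L ^ 2 / N))
    -- anticoncentration
    (hanti : ∀ N : ℕ, 1 ≤ N → ∀ a : EuclideanSpace ℝ (Fin d),
      (μ {ω | birkhoffShift τ N ω ∈ unitCubeCorner a}).toReal
        ≤ C₂ * (N : ℝ) ^ (-(d : ℝ) / 2)) :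
    ∃ C₃ : ℝ, 0 < C₃ ∧ ∃ c₃ : ℝ, 0 < c₃ ∧
      ∀ N : ℕ, 1 ≤ N → ∀ z : EuclideanSpace ℝ (Fin d),
        (μ {ω | birkhoffShift τ N ω ∈ unitCubeAt z}).toReal
          ≤ C₃ * (N : ℝ) ^ (-(d : ℝ) / 2) * Real.exp (-c₃ * ‖z‖ ^ 2 / N) := by
  classical
  obtain ⟨M0, hM0⟩ := hτb
  haveI hne : Nonempty (ℕ → A) := by
    by_contra h
    rw [not_nonempty_iff] at h
    have h1 : μ Set.univ = 1 := measure_univ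
    rw [Set.univ_eq_empty_iff.mpr h, measure_empty] at h1
    exact one_ne_zero h1.symm
  haveI : Nonempty A := ⟨Classical.arbitrary (ℕ → A) 0⟩
  open Stmt18Aux in
  set Mb := max M0 1 with hMbdef
  have hMb1 : (1:ℝ) ≤ Mb := le_max_right _ _
  have hMbτ : ∀ ω, ‖τ ω‖ ≤ Mb := fun ω => (hM0 ω).trans (le_max_left _ _)
  set sqd := Real.sqrt d with hsqddef
  have hsqd0 : 0 ≤ sqd := Real.sqrt_nonneg _
  set ρ := sqd + 2*R with hρdef
  have hρpos : 0 < ρ := by rw [hρdef]; positivity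
  set k := ⌈2*ρ⌉₊ with hkdef
  have hk1 : 1 ≤ k := Nat.one_le_iff_ne_zero.mpr (by positivity)
  have hkR : (k:ℝ) ≤ 2*ρ + 1 := (Nat.ceil_lt_add_one (by positivity)).le
  set Γ := ((k:ℕ):ℝ)^d with hΓdef
  have hΓ1 : 1 ≤ Γ := one_le_pow₀ (by exact_mod_cast hk1)
  set ρ' := (ρ+1)*sqd + 1 with hρ'def
  have hρ'pos : 0 < ρ' := by rw [hρ'def]; positivity
  set c₃ := c₂/1600 with hc₃def
  have hc₃pos : 0 < c₃ := by rw [hc₃def]; positivity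
  set twod := (2:ℝ)^((d:ℝ)/2) with htwoddef
  have htwod1 : 1 ≤ twod := Real.one_le_rpow (by norm_num) (by positivity)
  set G₂ := 2*K*Γ*twod with hG₂def
  have hG₂1 : 1 ≤ G₂ := by
    rw [hG₂def]
    calc (1:ℝ) ≤ 2*K := by linarith
    _ ≤ 2*K*Γ := le_mul_of_one_le_right (by linarith) hΓ1
    _ ≤ 2*K*Γ*twod := le_mul_of_one_le_right (by nlinarith) htwod1
  have hG₂pos : 0 < G₂ := lt_of_lt_of_le one_pos hG₂1
  set T := max (max (1600*R^2) (400*ρ'^2)) (max ((5/c₃)*Real.log G₂) ((2*Mb+sqd)^2+1))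
    with hTdef
  have hTpos : 0 < T := by
    have : (0:ℝ) < (2*Mb+sqd)^2+1 := by positivity
    exact lt_of_lt_of_le this ((le_max_right _ _).trans (le_max_right _ _))
  have hT1 : 1600*R^2 ≤ T := (le_max_left _ _).trans (le_max_left _ _)
  have hT2 : 400*ρ'^2 ≤ T := (le_max_right _ _).trans (le_max_left _ _)
  have hT4 : (5/c₃)*Real.log G₂ ≤ T := (le_max_left _ _).trans (le_max_right _ _)
  have hT5 : (2*Mb+sqd)^2+1 ≤ T := (le_max_right _ _).trans (le_max_right _ _)
  set C₃ := max (C₂*Real.exp (c₃*T)) (G₂*C₂^2) with hC₃def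
  have hC₃pos : 0 < C₃ := lt_of_lt_of_le (by positivity : (0:ℝ) < G₂*C₂^2) (le_max_right _ _)
  have hC₃a : C₂*Real.exp (c₃*T) ≤ C₃ := le_max_left _ _
  have hC₃b : G₂*C₂^2 ≤ C₃ := le_max_right _ _
  refine ⟨C₃, hC₃pos, c₃, hc₃pos, ?_⟩
  intro N
  induction N using Nat.strong_induction_on with
  | _ N IH =>
  intro hN z
  have hNR : (0:ℝ) < N := by exact_mod_cast hN
  have hNe : (0:ℝ) < (N:ℝ) ^ (-(d:ℝ)/2) := Real.rpow_pos_of_pos hNR _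
  -- a point of Q_z is within sqd of z
  have hQnear : ∀ t ∈ unitCubeAt z, ‖t - z‖ ≤ sqd := by
    intro t ht
    have := norm_le_sqrt_mul (t - z) 1 one_pos.le (fun i => by
      obtain ⟨l, r⟩ := ht i
      have : (t - z) i = t i - z i := rfl
      rw [this, abs_le]
      constructor <;> linarith)
    simpa using this
  by_cases hz : ‖z‖^2 ≤ T * N
  · -- small regime: direct anticoncentration
    have hset : {ω | birkhoffShift τ N ω ∈ unitCubeAt z}
        = {ω | birkhoffShift τ N ω ∈
            unitCubeCorner (WithLp.toLp 2 (fun i => z i - 1/2) : EuclideanSpace ℝ (Fin d))} := by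
      have h2 : unitCubeCorner (WithLp.toLp 2 (fun i => z i - 1/2) : EuclideanSpace ℝ (Fin d))
          = unitCubeAt z := by
        ext t
        simp only [unitCubeCorner, unitCubeAt, Set.mem_setOf_eq, PiLp.toLp_apply]
        constructor <;> intro h i <;> obtain ⟨l, r⟩ := h i <;>
          exact ⟨by linarith, by linarith⟩
      rw [h2]
    rw [hset]
    have h2 := hanti N hN (WithLp.toLp 2 (fun i => z i - 1/2) : EuclideanSpace ℝ (Fin d))
    have h3 : C₂ ≤ C₃ * Real.exp (-c₃ * ‖z‖^2 / N) := by
      have e1 : -(c₃*T) ≤ -c₃ * ‖z‖^2 / N := by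
        rw [neg_mul, neg_div, neg_le_neg_iff]
        rw [div_le_iff₀ hNR]
        calc c₃ * ‖z‖^2 ≤ c₃ * (T * N) := by
              apply mul_le_mul_of_nonneg_left hz hc₃pos.le
        _ = c₃ * T * N := by ring
      calc C₂ = (C₂ * Real.exp (c₃*T)) * Real.exp (-(c₃*T)) := by
            rw [mul_assoc, ← Real.exp_add]; simp
      _ ≤ C₃ * Real.exp (-c₃ * ‖z‖^2 / N) := by
            apply mul_le_mul hC₃a (Real.exp_le_exp.mpr e1) (Real.exp_pos _).le hC₃pos.le
    calc (μ _).toReal ≤ C₂ * (N:ℝ)^(-(d:ℝ)/2) := h2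
    _ ≤ (C₃ * Real.exp (-c₃ * ‖z‖^2 / N)) * (N:ℝ)^(-(d:ℝ)/2) := by
          apply mul_le_mul_of_nonneg_right h3 hNe.le
    _ = C₃ * (N:ℝ)^(-(d:ℝ)/2) * Real.exp (-c₃ * ‖z‖^2 / N) := by ring
  · push_neg at hz
    have hzpos : 0 < ‖z‖ := by
      by_contra h
      push_neg at h
      have : ‖z‖ = 0 := le_antisymm h (norm_nonneg z)
      rw [this] at hz
      nlinarith
    rcases le_or_gt N 2 with hN2 | hN3
    · -- the target set is empty
      have hempty : {ω | birkhoffShift τ N ω ∈ unitCubeAt z} = ∅ := by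
        ext ω
        simp only [Set.mem_setOf_eq, Set.mem_empty_iff_false, iff_false]
        intro hmem
        have hb1 : ‖birkhoffShift τ N ω‖ ≤ N * Mb := bs_norm_le τ Mb hMbτ N ω
        have hb2 : ‖birkhoffShift τ N ω - z‖ ≤ sqd := hQnear _ hmem
        have hNle : (N:ℝ) ≤ 2 := by exact_mod_cast hN2
        have hz_le : ‖z‖ ≤ 2*Mb + sqd := by
          calc ‖z‖ ≤ ‖birkhoffShift τ N ω‖ + ‖z - birkhoffShift τ N ω‖ := by
                have := norm_add_le (birkhoffShift τ N ω) (z - birkhoffShift τ N ω)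
                simpa using this
          _ = ‖birkhoffShift τ N ω‖ + ‖birkhoffShift τ N ω - z‖ := by rw [norm_sub_rev]
          _ ≤ N * Mb + sqd := add_le_add hb1 hb2
          _ ≤ 2*Mb + sqd := by nlinarith
        have h1 : ‖z‖^2 ≤ (2*Mb+sqd)^2 := pow_le_pow_left₀ (norm_nonneg z) hz_le 2
        have h2 : (1:ℝ) ≤ N := by exact_mod_cast hN
        nlinarith
      rw [hempty]
      simp only [measure_empty, ENNReal.toReal_zero]
      positivity
    · -- main inductive case
      -- main inductive case: N ≥ 3, T*N < ‖z‖²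
      set n := N / 2 with hndef
      set m := N - n with hmdef
      have hn1 : 1 ≤ n := by omega
      have hm1 : 1 ≤ m := by omega
      have hnm : n + m = N := by omega
      have hmN : m < N := by omega
      have h2n : 2*(n:ℝ) ≤ N := by exact_mod_cast (by omega : 2*n ≤ N)
      have h2m : (N:ℝ) ≤ 2*m := by exact_mod_cast (by omega : N ≤ 2*m)
      have h3m : 3*(m:ℝ) ≤ 2*N := by exact_mod_cast (by omega : 3*m ≤ 2*N)
      have hnR : (0:ℝ) < n := by exact_mod_cast hn1
      have hmR : (0:ℝ) < m := by exact_mod_cast hm1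
      have hN1R : (1:ℝ) ≤ N := by exact_mod_cast hN
      have hzT : T ≤ ‖z‖^2 / N := (le_div_iff₀ hNR).mpr (by linarith)
      have hTN : T ≤ T*(N:ℝ) := le_mul_of_one_le_right hTpos.le hN1R
      have hzR40 : 40*R ≤ ‖z‖ := by
        have h1 : (40*R)^2 ≤ ‖z‖^2 := by
          calc (40*R)^2 = 1600*R^2 := by ring
          _ ≤ T := hT1
          _ ≤ T*N := hTN
          _ ≤ ‖z‖^2 := hz.le
        exact le_of_pow_le_pow_left₀ two_ne_zero (norm_nonneg z) h1
      have hzρ'20 : 20*ρ' ≤ ‖z‖ := by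
        have h1 : (20*ρ')^2 ≤ ‖z‖^2 := by
          calc (20*ρ')^2 = 400*ρ'^2 := by ring
          _ ≤ T := hT2
          _ ≤ T*N := hTN
          _ ≤ ‖z‖^2 := hz.le
        exact le_of_pow_le_pow_left₀ two_ne_zero (norm_nonneg z) h1
      have hmhalf : (m:ℝ)^(-(d:ℝ)/2) ≤ twod * (N:ℝ)^(-(d:ℝ)/2) := by
        rw [htwoddef]
        exact rpow_half_trick N m (by linarith) (by omega) d
      have htwod0 : (0:ℝ) < twod := lt_of_lt_of_le one_pos htwod1
      have hΓ0 : (0:ℝ) < Γ := lt_of_lt_of_le one_pos hΓ1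
      have hK0 : (0:ℝ) < K := lt_of_lt_of_le one_pos hK
      -- first-half cylinder data
      set vB : (Fin n → A) → EuclideanSpace ℝ (Fin d) :=
        fun w => birkhoffShift τ n (wext n w) with hvBdef
      set CY : (Fin n → A) → Set (ℕ → A) := fun w => cylinder n (wext n w) with hCYdef
      set q : (Fin n → A) → ℝ :=
        fun w => (μ {ω | birkhoffShift τ m ω ∈ {t | ‖t - (z - vB w)‖ ≤ ρ}}).toReal with hqdef
      set p : (Fin n → A) → ℝ := fun w => (μ (CY w)).toReal with hpdef
      have hp0 : ∀ w, 0 ≤ p w := fun w => ENNReal.toReal_nonneg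
      have hq0 : ∀ w, 0 ≤ q w := fun w => ENNReal.toReal_nonneg
      -- Step 1: decomposition over first-half cylinders, Gibbs property
      have step1 : (μ {ω | birkhoffShift τ N ω ∈ unitCubeAt z}).toReal
          ≤ ∑ w : Fin n → A, K * (p w * q w) := by
        have hincl : ∀ w : Fin n → A,
            {ω | birkhoffShift τ N ω ∈ unitCubeAt z} ∩ CY w ⊆
            CY w ∩ shift^[n] ⁻¹'
              {ω | birkhoffShift τ m ω ∈ {t | ‖t - (z - vB w)‖ ≤ sqd + R}} := by
          rintro w ω ⟨hωQ, hωC⟩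
          refine ⟨hωC, ?_⟩
          have hco : birkhoffShift τ N ω
              = birkhoffShift τ n ω + birkhoffShift τ m (shift^[n] ω) := by
            rw [← hnm]; exact bs_add τ n m ω
          have hd : ‖birkhoffShift τ n ω - vB w‖ ≤ R :=
            hdist n hn1 (wext n w) ω hωC (wext n w) (wext_mem n w)
          have hqn : ‖birkhoffShift τ N ω - z‖ ≤ sqd := hQnear _ hωQ
          show ‖birkhoffShift τ m (shift^[n] ω) - (z - vB w)‖ ≤ sqd + R
          have hEq : birkhoffShift τ m (shift^[n] ω) - (z - vB w)
              = (birkhoffShift τ N ω - z) - (birkhoffShift τ n ω - vB w) := by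
            rw [hco]; abel
          rw [hEq]
          calc ‖_ - _‖ ≤ ‖birkhoffShift τ N ω - z‖ + ‖birkhoffShift τ n ω - vB w‖ :=
                norm_sub_le _ _
          _ ≤ sqd + R := add_le_add hqn hd
        have hfat : ∀ w : Fin n → A, ∀ x y : EuclideanSpace ℝ (Fin d),
            x ∈ {t | ‖t - (z - vB w)‖ ≤ sqd + R} → ‖y - x‖ ≤ R →
            y ∈ {t | ‖t - (z - vB w)‖ ≤ ρ} := by
          intro w x y hx hyx
          show ‖y - (z - vB w)‖ ≤ ρ
          have h0 : y - (z - vB w) = (y - x) + (x - (z - vB w)) := by abel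
          rw [h0, hρdef]
          calc ‖_ + _‖ ≤ ‖y-x‖ + ‖x - (z - vB w)‖ := norm_add_le _ _
          _ ≤ R + (sqd + R) := add_le_add hyx hx
          _ = sqd + 2*R := by ring
        have e2 : ∀ w : Fin n → A,
            μ ({ω | birkhoffShift τ N ω ∈ unitCubeAt z} ∩ CY w)
            ≤ ENNReal.ofReal K * μ (CY w) *
              μ {ω | birkhoffShift τ m ω ∈ {t | ‖t - (z - vB w)‖ ≤ ρ}} := fun w =>
          (measure_mono (hincl w)).trans
            (gibbs_ext μ τ K R hGibbs hdist n m hn1 hm1 (wext n w) _ _ (hfat w))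
        have e3 : μ {ω | birkhoffShift τ N ω ∈ unitCubeAt z}
            ≤ ∑ w : Fin n → A, ENNReal.ofReal K * μ (CY w) *
                μ {ω | birkhoffShift τ m ω ∈ {t | ‖t - (z - vB w)‖ ≤ ρ}} :=
          (partition_le μ n _).trans (Finset.sum_le_sum fun w _ => e2 w)
        have hfin : ∀ w ∈ (Finset.univ : Finset (Fin n → A)),
            ENNReal.ofReal K * μ (CY w) *
              μ {ω | birkhoffShift τ m ω ∈ {t | ‖t - (z - vB w)‖ ≤ ρ}} ≠ ⊤ := fun w _ =>
          ENNReal.mul_ne_top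
            (ENNReal.mul_ne_top ENNReal.ofReal_ne_top (measure_ne_top μ _))
            (measure_ne_top μ _)
        calc (μ {ω | birkhoffShift τ N ω ∈ unitCubeAt z}).toReal
            ≤ (∑ w : Fin n → A, ENNReal.ofReal K * μ (CY w) *
                μ {ω | birkhoffShift τ m ω ∈ {t | ‖t - (z - vB w)‖ ≤ ρ}}).toReal :=
              ENNReal.toReal_mono (ENNReal.sum_ne_top.mpr hfin) e3
        _ = ∑ w : Fin n → A, (ENNReal.ofReal K * μ (CY w) *
              μ {ω | birkhoffShift τ m ω ∈ {t | ‖t - (z - vB w)‖ ≤ ρ}}).toReal :=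
              ENNReal.toReal_sum hfin
        _ = ∑ w : Fin n → A, K * (p w * q w) := by
              refine Finset.sum_congr rfl fun w _ => ?_
              rw [ENNReal.toReal_mul, ENNReal.toReal_mul,
                ENNReal.toReal_ofReal (by linarith : (0:ℝ) ≤ K), mul_assoc]
      -- covering bound machinery
      have qbound : ∀ w : Fin n → A, ∀ b : ℝ,
          (∀ j : Fin d → Fin k, (μ {ω | birkhoffShift τ m ω ∈
              unitCubeCorner (WithLp.toLp 2 (fun i => (z - vB w) i - ρ + ((j i : ℕ) : ℝ)) :
                EuclideanSpace ℝ (Fin d))}).toReal ≤ b)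
          → q w ≤ Γ * b := by
        intro w b hb
        have hcov := ball_subset_cubes (z - vB w) ρ hρpos
        have h1 : μ {ω | birkhoffShift τ m ω ∈ {t | ‖t - (z - vB w)‖ ≤ ρ}}
            ≤ ∑ j ∈ (Finset.univ : Finset (Fin d → Fin k)),
                μ {ω | birkhoffShift τ m ω ∈
                  unitCubeCorner (WithLp.toLp 2 (fun i => (z - vB w) i - ρ + ((j i : ℕ) : ℝ)) :
                    EuclideanSpace ℝ (Fin d))} := by
          refine le_trans (measure_mono ?_) (measure_biUnion_finset_le _ _)
          intro ω hω
          obtain ⟨j, hj⟩ := Set.mem_iUnion.mp (hcov hω)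
          exact Set.mem_biUnion (Finset.mem_univ j) hj
        have hfin : ∀ j ∈ (Finset.univ : Finset (Fin d → Fin k)),
            μ {ω | birkhoffShift τ m ω ∈
              unitCubeCorner (WithLp.toLp 2 (fun i => (z - vB w) i - ρ + ((j i : ℕ) : ℝ)) :
                EuclideanSpace ℝ (Fin d))} ≠ ⊤ := fun j _ => measure_ne_top μ _
        calc q w ≤ (∑ j ∈ (Finset.univ : Finset (Fin d → Fin k)),
                μ {ω | birkhoffShift τ m ω ∈
                  unitCubeCorner (WithLp.toLp 2 (fun i => (z - vB w) i - ρ + ((j i : ℕ) : ℝ)) :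
                    EuclideanSpace ℝ (Fin d))}).toReal :=
              ENNReal.toReal_mono (ENNReal.sum_ne_top.mpr hfin) h1
        _ = ∑ j ∈ (Finset.univ : Finset (Fin d → Fin k)),
              (μ {ω | birkhoffShift τ m ω ∈
                unitCubeCorner (WithLp.toLp 2 (fun i => (z - vB w) i - ρ + ((j i : ℕ) : ℝ)) :
                  EuclideanSpace ℝ (Fin d))}).toReal := ENNReal.toReal_sum hfin
        _ ≤ ∑ _j ∈ (Finset.univ : Finset (Fin d → Fin k)), b := Finset.sum_le_sum fun j _ => hb j
        _ = (Fintype.card (Fin d → Fin k) : ℝ) * b := by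
              rw [Finset.sum_const, Finset.card_univ, nsmul_eq_mul]
        _ = Γ * b := by
              rw [hΓdef]
              congr 1
              rw [Fintype.card_fun, Fintype.card_fin, Fintype.card_fin]
              push_cast
              ring
      have covA : ∀ w : Fin n → A, q w ≤ Γ * (C₂ * (m:ℝ)^(-(d:ℝ)/2)) :=
        fun w => qbound w _ (fun j => hanti m hm1 _)
      -- second-half covering with the induction hypothesis
      have covB : ∀ w : Fin n → A, ‖vB w‖ ≤ ‖z‖/20 →
          q w ≤ Γ * (C₃ * (m:ℝ)^(-(d:ℝ)/2) *
            Real.exp (-c₃ * ((‖z - vB w‖ - ρ')^2) / m)) := by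
        intro w hw
        have hz'1 : (19/20)*‖z‖ ≤ ‖z - vB w‖ := by
          have h0 := norm_sub_norm_le z (vB w)
          linarith
        have hρ'z : ρ' ≤ ‖z‖/20 := by linarith
        have hD0 : 0 ≤ ‖z - vB w‖ - ρ' := by linarith [hzpos.le]
        refine qbound w _ (fun j => ?_)
        set y : EuclideanSpace ℝ (Fin d) :=
          (WithLp.toLp 2 (fun i => (z - vB w) i - ρ + ((j i : ℕ) : ℝ) + 1/2)) with hydef
        have hcc : unitCubeCorner (WithLp.toLp 2 (fun i => (z - vB w) i - ρ + ((j i : ℕ) : ℝ)) :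
            EuclideanSpace ℝ (Fin d)) = unitCubeAt y := by
          ext t
          simp only [unitCubeCorner, unitCubeAt, Set.mem_setOf_eq, hydef, PiLp.toLp_apply]
          constructor <;> intro h i <;> obtain ⟨l, r⟩ := h i <;>
            exact ⟨by linarith, by linarith⟩
        have hyz' : ‖y - (z - vB w)‖ ≤ sqd * (ρ+1) := by
          apply norm_le_sqrt_mul _ _ (by positivity)
          intro i
          have hji0 : (0:ℝ) ≤ ((j i : ℕ) : ℝ) := Nat.cast_nonneg _
          have hjik : ((j i : ℕ):ℝ) ≤ (k:ℝ) - 1 := by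
            have h0 : (j i : ℕ) < k := (j i).2
            have h1 : ((j i : ℕ):ℝ) + 1 ≤ (k:ℝ) := by exact_mod_cast Nat.succ_le_of_lt h0
            linarith
          have h2 : (y - (z - vB w)) i = ((j i : ℕ):ℝ) + 1/2 - ρ := by
            show y i - (z - vB w) i = _
            rw [hydef, PiLp.toLp_apply]
            ring
          rw [h2, abs_le]
          constructor
          · linarith
          · linarith [hkR]
        have hy_ge : ‖z - vB w‖ - ρ' ≤ ‖y‖ := by
          have h1 : ‖z - vB w‖ - ‖y‖ ≤ ‖(z - vB w) - y‖ := norm_sub_norm_le _ _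
          have h2 : ‖(z - vB w) - y‖ = ‖y - (z - vB w)‖ := norm_sub_rev _ _
          have h3 : sqd*(ρ+1) = ρ' - 1 := by rw [hρ'def]; ring
          linarith [hyz']
        have hexp : Real.exp (-c₃ * ‖y‖^2 / m) ≤
            Real.exp (-c₃ * ((‖z - vB w‖ - ρ')^2) / m) := by
          apply Real.exp_le_exp.mpr
          have hsq : (‖z - vB w‖-ρ')^2 ≤ ‖y‖^2 := pow_le_pow_left₀ hD0 hy_ge 2
          have h2 : c₃ * ((‖z - vB w‖-ρ')^2) / m ≤ c₃ * ‖y‖^2 / m := by gcongr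
          have e1 : -c₃ * ‖y‖^2 / m = -(c₃ * ‖y‖^2 / m) := by ring
          have e2 : -c₃ * ((‖z - vB w‖-ρ')^2) / m
              = -(c₃ * ((‖z - vB w‖-ρ')^2) / m) := by ring
          rw [e1, e2]
          exact neg_le_neg h2
        rw [hcc]
        exact (IH m hmN hm1 y).trans
          (mul_le_mul_of_nonneg_left hexp (by positivity))
      -- Step 3: large-‖v‖ cylinders (large deviations for the first half)
      have hS1 : ∑ w ∈ Finset.univ.filter (fun w : Fin n → A => ‖z‖/20 < ‖vB w‖),
            K * (p w * q w)
          ≤ C₃/2 * ((N:ℝ)^(-(d:ℝ)/2) * Real.exp (-c₃ * ‖z‖^2 / N)) := by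
        set L := ‖z‖/20 - R with hLdef
        have hL40 : ‖z‖/40 ≤ L := by rw [hLdef]; linarith
        have hLpos : 0 < L := lt_of_lt_of_le (by positivity) hL40
        have hsub : ∀ w ∈ Finset.univ.filter (fun w : Fin n → A => ‖z‖/20 < ‖vB w‖),
            CY w ⊆ {ω | L < ‖birkhoffShift τ n ω‖} := by
          intro w hw ω hω
          have hd : ‖vB w - birkhoffShift τ n ω‖ ≤ R :=
            hdist n hn1 (wext n w) (wext n w) (wext_mem n w) ω hω
          have h1 : ‖z‖/20 < ‖vB w‖ := (Finset.mem_filter.mp hw).2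
          have h2 : ‖vB w‖ - ‖birkhoffShift τ n ω‖ ≤ R := (norm_sub_norm_le _ _).trans hd
          show L < ‖birkhoffShift τ n ω‖
          rw [hLdef]; linarith
        have hsum1 : ∑ w ∈ Finset.univ.filter (fun w : Fin n → A => ‖z‖/20 < ‖vB w‖), p w
            ≤ (μ {ω | L < ‖birkhoffShift τ n ω‖}).toReal := sum_cyl_le μ n _ _ hsub
        have hLD1 := hLD n hn1 L hLpos
        have hexp2 : Real.exp (-c₂ * L^2 / n) ≤ Real.exp (-c₃ * ‖z‖^2 / N) := by
          apply Real.exp_le_exp.mpr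
          have hL2 : ‖z‖^2/1600 ≤ L^2 := by
            have h1 : (‖z‖/40)^2 ≤ L^2 := pow_le_pow_left₀ (by positivity) hL40 2
            calc ‖z‖^2/1600 = (‖z‖/40)^2 := by ring
            _ ≤ L^2 := h1
          have hA : c₃*‖z‖^2 ≤ c₂*L^2 := by
            rw [hc₃def]
            calc c₂/1600*‖z‖^2 = c₂*(‖z‖^2/1600) := by ring
            _ ≤ c₂*L^2 := mul_le_mul_of_nonneg_left hL2 hc₂.le
          have hB : (n:ℝ) ≤ N := by linarith
          have hmain : c₃ * ‖z‖^2 / N ≤ c₂ * L^2 / n := by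
            rw [div_le_div_iff₀ hNR hnR]
            calc c₃*‖z‖^2*n ≤ c₂*L^2*n := mul_le_mul_of_nonneg_right hA hnR.le
            _ ≤ c₂*L^2*N := by
                  apply mul_le_mul_of_nonneg_left hB (by positivity)
          have e1 : -c₂ * L^2 / n = -(c₂ * L^2 / n) := by ring
          have e2 : -c₃ * ‖z‖^2 / N = -(c₃ * ‖z‖^2 / N) := by ring
          rw [e1, e2]
          exact neg_le_neg hmain
        have hcb : (0:ℝ) ≤ Γ * (C₂ * (m:ℝ)^(-(d:ℝ)/2)) := by positivity
        calc ∑ w ∈ Finset.univ.filter (fun w : Fin n → A => ‖z‖/20 < ‖vB w‖), K*(p w * q w)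
            ≤ ∑ w ∈ Finset.univ.filter (fun w : Fin n → A => ‖z‖/20 < ‖vB w‖),
                (K*(Γ * (C₂ * (m:ℝ)^(-(d:ℝ)/2)))) * p w := by
              refine Finset.sum_le_sum fun w _ => ?_
              have h1 : p w * q w ≤ p w * (Γ * (C₂ * (m:ℝ)^(-(d:ℝ)/2))) :=
                mul_le_mul_of_nonneg_left (covA w) (hp0 w)
              calc K*(p w * q w) ≤ K*(p w * (Γ * (C₂ * (m:ℝ)^(-(d:ℝ)/2)))) :=
                    mul_le_mul_of_nonneg_left h1 (by linarith)
              _ = (K*(Γ * (C₂ * (m:ℝ)^(-(d:ℝ)/2)))) * p w := by ring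
        _ = (K*(Γ * (C₂ * (m:ℝ)^(-(d:ℝ)/2)))) *
              ∑ w ∈ Finset.univ.filter (fun w : Fin n → A => ‖z‖/20 < ‖vB w‖), p w := by
              rw [Finset.mul_sum]
        _ ≤ (K*(Γ * (C₂ * (m:ℝ)^(-(d:ℝ)/2)))) * (C₂ * Real.exp (-c₃ * ‖z‖^2 / N)) := by
              apply mul_le_mul_of_nonneg_left _ (by positivity)
              refine hsum1.trans (hLD1.trans ?_)
              exact mul_le_mul_of_nonneg_left hexp2 hC₂.le
        _ ≤ C₃/2 * ((N:ℝ)^(-(d:ℝ)/2) * Real.exp (-c₃ * ‖z‖^2 / N)) := by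
              have hKΓ : K*(Γ*(C₂*(m:ℝ)^(-(d:ℝ)/2)))*C₂ ≤ C₃/2 * (N:ℝ)^(-(d:ℝ)/2) := by
                calc K*(Γ*(C₂*(m:ℝ)^(-(d:ℝ)/2)))*C₂
                    ≤ K*(Γ*(C₂*(twod*(N:ℝ)^(-(d:ℝ)/2))))*C₂ := by
                      apply mul_le_mul_of_nonneg_right _ hC₂.le
                      apply mul_le_mul_of_nonneg_left _ hK0.le
                      apply mul_le_mul_of_nonneg_left _ hΓ0.le
                      exact mul_le_mul_of_nonneg_left hmhalf hC₂.le
                _ = (K*Γ*twod*C₂^2) * (N:ℝ)^(-(d:ℝ)/2) := by ring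
                _ ≤ C₃/2 * (N:ℝ)^(-(d:ℝ)/2) := by
                      apply mul_le_mul_of_nonneg_right _ hNe.le
                      have h0 : K*Γ*twod*C₂^2 = (G₂*C₂^2)/2 := by rw [hG₂def]; ring
                      rw [h0]; linarith
              calc (K*(Γ * (C₂ * (m:ℝ)^(-(d:ℝ)/2)))) * (C₂ * Real.exp (-c₃ * ‖z‖^2 / N))
                  = (K*(Γ*(C₂*(m:ℝ)^(-(d:ℝ)/2)))*C₂) * Real.exp (-c₃ * ‖z‖^2 / N) := by ring
              _ ≤ (C₃/2 * (N:ℝ)^(-(d:ℝ)/2)) * Real.exp (-c₃ * ‖z‖^2 / N) :=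
                    mul_le_mul_of_nonneg_right hKΓ (Real.exp_pos _).le
              _ = C₃/2 * ((N:ℝ)^(-(d:ℝ)/2) * Real.exp (-c₃ * ‖z‖^2 / N)) := by ring
      -- Step 4: small-‖v‖ cylinders (induction hypothesis on the second half)
      have hS2 : ∑ w ∈ Finset.univ.filter (fun w : Fin n → A => ¬ (‖z‖/20 < ‖vB w‖)),
            K * (p w * q w)
          ≤ C₃/2 * ((N:ℝ)^(-(d:ℝ)/2) * Real.exp (-c₃ * ‖z‖^2 / N)) := by
        have hTexp : G₂ * Real.exp (-(c₃*T)/5) ≤ 1 := by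
          have h1 : Real.log G₂ ≤ c₃*T/5 := by
            have h0 : (0:ℝ) < c₃/5 := by positivity
            calc Real.log G₂ = (c₃/5)*((5/c₃)*Real.log G₂) := by field_simp
            _ ≤ (c₃/5)*T := mul_le_mul_of_nonneg_left hT4 h0.le
            _ = c₃*T/5 := by ring
          have h2 : G₂ ≤ Real.exp (c₃*T/5) := by
            rw [← Real.exp_log hG₂pos]
            exact Real.exp_le_exp.mpr h1
          calc G₂ * Real.exp (-(c₃*T)/5)
              ≤ Real.exp (c₃*T/5) * Real.exp (-(c₃*T)/5) :=
                mul_le_mul_of_nonneg_right h2 (Real.exp_pos _).le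
          _ = 1 := by rw [← Real.exp_add, show c₃*T/5 + -(c₃*T)/5 = 0 by ring, Real.exp_zero]
        set cB : ℝ := Γ * (C₃ * ((m:ℝ)^(-(d:ℝ)/2)) *
            (Real.exp (-c₃ * ‖z‖^2 / N) * Real.exp (-(c₃*T)/5))) with hcBdef
        have hqw : ∀ w ∈ Finset.univ.filter (fun w : Fin n → A => ¬ (‖z‖/20 < ‖vB w‖)),
            q w ≤ cB := by
          intro w hw
          have hvw : ‖vB w‖ ≤ ‖z‖/20 := not_lt.mp (Finset.mem_filter.mp hw).2
          refine (covB w hvw).trans ?_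
          rw [hcBdef]
          apply mul_le_mul_of_nonneg_left _ (by positivity : (0:ℝ) ≤ Γ)
          rw [mul_assoc, mul_assoc]
          apply mul_le_mul_of_nonneg_left _ hC₃pos.le
          apply mul_le_mul_of_nonneg_left _ (by positivity)
          -- exp(-c₃ (‖z-vB w‖-ρ')²/m) ≤ exp(-c₃‖z‖²/N) * exp(-(c₃T)/5)
          rw [← Real.exp_add]
          apply Real.exp_le_exp.mpr
          have hz'1 : (19/20)*‖z‖ ≤ ‖z - vB w‖ := by
            have h0 := norm_sub_norm_le z (vB w)
            linarith
          have hρ'z : ρ' ≤ ‖z‖/20 := by linarith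
          have hD09 : (18/20)*‖z‖ ≤ ‖z - vB w‖ - ρ' := by linarith
          have hD0 : 0 ≤ ‖z - vB w‖ - ρ' := le_trans (by positivity) hD09
          have hD81 : (81/100)*‖z‖^2 ≤ (‖z - vB w‖ - ρ')^2 := by
            have h5 := pow_le_pow_left₀ (by positivity : (0:ℝ) ≤ (18/20)*‖z‖) hD09 2
            calc (81/100)*‖z‖^2 = ((18/20)*‖z‖)^2 := by ring
            _ ≤ _ := h5
          have hDm : (243/200)*‖z‖^2/N ≤ (‖z - vB w‖ - ρ')^2/m := by
            rw [div_le_div_iff₀ hNR hmR]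
            have h6 : (243/200)*‖z‖^2*m ≤ (81/100)*‖z‖^2*N := by
              calc (243/200)*‖z‖^2*m = ((81/100)*‖z‖^2/2)*(3*m) := by ring
              _ ≤ ((81/100)*‖z‖^2/2)*(2*N) :=
                    mul_le_mul_of_nonneg_left h3m (by positivity)
              _ = (81/100)*‖z‖^2*N := by ring
            have h7 : (81/100)*‖z‖^2*N ≤ (‖z - vB w‖ - ρ')^2*N :=
              mul_le_mul_of_nonneg_right hD81 hNR.le
            linarith
          -- goal : -c₃ * (‖z-vB w‖-ρ')²/m ≤ -c₃‖z‖²/N + -(c₃T)/5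
          have hgoal : c₃*(‖z‖^2/N) + c₃*T/5 ≤ c₃*((‖z - vB w‖ - ρ')^2/m) := by
            have hXT : T ≤ ‖z‖^2/N := hzT
            have hX0 : (0:ℝ) ≤ ‖z‖^2/N := by positivity
            have hcX : c₃*T ≤ c₃*(‖z‖^2/N) := mul_le_mul_of_nonneg_left hXT hc₃pos.le
            have h1 : c₃*T/5 ≤ (43/200)*(c₃*(‖z‖^2/N)) := by
              have h0 : (0:ℝ) ≤ c₃*(‖z‖^2/N) := mul_nonneg hc₃pos.le hX0
              linarith
            have h2 : (243/200)*(c₃*(‖z‖^2/N)) ≤ c₃*((‖z - vB w‖ - ρ')^2/m) := by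
              have h4 := mul_le_mul_of_nonneg_left hDm hc₃pos.le
              calc (243/200)*(c₃*(‖z‖^2/N)) = c₃*((243/200)*‖z‖^2/N) := by ring
              _ ≤ c₃*((‖z - vB w‖ - ρ')^2/m) := h4
            linarith
          have e1 : -c₃ * ((‖z - vB w‖ - ρ')^2) / m = -(c₃*((‖z - vB w‖ - ρ')^2/m)) := by
            ring
          have e2 : -c₃ * ‖z‖^2 / N + -(c₃*T)/5 = -(c₃*(‖z‖^2/N) + c₃*T/5) := by ring
          rw [e1, e2]
          exact neg_le_neg hgoal
        have hsum2 : ∑ w ∈ Finset.univ.filter (fun w : Fin n → A => ¬ (‖z‖/20 < ‖vB w‖)),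
            p w ≤ 1 := by
          have h0 := sum_cyl_le μ n
            (Finset.univ.filter (fun w : Fin n → A => ¬ (‖z‖/20 < ‖vB w‖)))
            Set.univ (fun w _ => Set.subset_univ _)
          simpa using h0
        have hcB0 : 0 ≤ cB := by rw [hcBdef]; positivity
        calc ∑ w ∈ Finset.univ.filter (fun w : Fin n → A => ¬ (‖z‖/20 < ‖vB w‖)), K*(p w*q w)
            ≤ ∑ w ∈ Finset.univ.filter (fun w : Fin n → A => ¬ (‖z‖/20 < ‖vB w‖)),
                (K*cB) * p w := by
              refine Finset.sum_le_sum fun w hw => ?_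
              have h1 : p w * q w ≤ p w * cB :=
                mul_le_mul_of_nonneg_left (hqw w hw) (hp0 w)
              calc K*(p w*q w) ≤ K*(p w*cB) :=
                    mul_le_mul_of_nonneg_left h1 (by linarith)
              _ = (K*cB)*p w := by ring
        _ = (K*cB) * ∑ w ∈ Finset.univ.filter
              (fun w : Fin n → A => ¬ (‖z‖/20 < ‖vB w‖)), p w := by rw [Finset.mul_sum]
        _ ≤ (K*cB) * 1 := by
              apply mul_le_mul_of_nonneg_left hsum2 (by positivity)
        _ ≤ C₃/2 * ((N:ℝ)^(-(d:ℝ)/2) * Real.exp (-c₃ * ‖z‖^2 / N)) := by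
              rw [mul_one, hcBdef]
              -- K*Γ*C₃*m^e*exp1*exp2 ≤ C₃/2 * N^e * exp1
              have hmain : K*(Γ*(C₃*((m:ℝ)^(-(d:ℝ)/2)) *
                  (Real.exp (-c₃ * ‖z‖^2 / N) * Real.exp (-(c₃*T)/5))))
                  ≤ C₃/2 * ((N:ℝ)^(-(d:ℝ)/2) * Real.exp (-c₃ * ‖z‖^2 / N)) := by
                have hm1' : (m:ℝ)^(-(d:ℝ)/2) ≤ twod * (N:ℝ)^(-(d:ℝ)/2) := hmhalf
                have step : K*Γ*C₃*((m:ℝ)^(-(d:ℝ)/2))*Real.exp (-(c₃*T)/5)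
                    ≤ K*Γ*C₃*(twod * (N:ℝ)^(-(d:ℝ)/2))*Real.exp (-(c₃*T)/5) := by
                  have h0 : (0:ℝ) ≤ K*Γ*C₃ := by positivity
                  have h1 : (0:ℝ) ≤ Real.exp (-(c₃*T)/5) := (Real.exp_pos _).le
                  exact mul_le_mul_of_nonneg_right
                    (mul_le_mul_of_nonneg_left hm1' h0) h1
                have step2 : K*Γ*C₃*twod*Real.exp (-(c₃*T)/5) ≤ C₃/2 := by
                  have h0 : K*Γ*C₃*twod*Real.exp (-(c₃*T)/5)
                      = (G₂*Real.exp (-(c₃*T)/5)) * (C₃/2) := by rw [hG₂def]; ring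
                  rw [h0]
                  calc (G₂*Real.exp (-(c₃*T)/5)) * (C₃/2) ≤ 1 * (C₃/2) :=
                        mul_le_mul_of_nonneg_right hTexp (by positivity)
                  _ = C₃/2 := one_mul _
                calc K*(Γ*(C₃*((m:ℝ)^(-(d:ℝ)/2)) *
                      (Real.exp (-c₃ * ‖z‖^2 / N) * Real.exp (-(c₃*T)/5))))
                    = (K*Γ*C₃*((m:ℝ)^(-(d:ℝ)/2))*Real.exp (-(c₃*T)/5))
                        * Real.exp (-c₃ * ‖z‖^2 / N) := by ring
                _ ≤ (K*Γ*C₃*(twod * (N:ℝ)^(-(d:ℝ)/2))*Real.exp (-(c₃*T)/5))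
                        * Real.exp (-c₃ * ‖z‖^2 / N) :=
                      mul_le_mul_of_nonneg_right step (Real.exp_pos _).le
                _ = (K*Γ*C₃*twod*Real.exp (-(c₃*T)/5)) *
                      ((N:ℝ)^(-(d:ℝ)/2) * Real.exp (-c₃ * ‖z‖^2 / N)) := by ring
                _ ≤ C₃/2 * ((N:ℝ)^(-(d:ℝ)/2) * Real.exp (-c₃ * ‖z‖^2 / N)) :=
                      mul_le_mul_of_nonneg_right step2 (by positivity)
              exact hmain
      -- assemble
      have htotal := Finset.sum_filter_add_sum_filter_not
        (Finset.univ : Finset (Fin n → A)) (fun w => ‖z‖/20 < ‖vB w‖)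
        (fun w => K*(p w*q w))
      calc (μ {ω | birkhoffShift τ N ω ∈ unitCubeAt z}).toReal
          ≤ ∑ w : Fin n → A, K * (p w * q w) := step1
      _ = (∑ w ∈ Finset.univ.filter (fun w : Fin n → A => ‖z‖/20 < ‖vB w‖), K*(p w*q w))
            + ∑ w ∈ Finset.univ.filter (fun w : Fin n → A => ¬ (‖z‖/20 < ‖vB w‖)),
                K*(p w*q w) := htotal.symm
      _ ≤ C₃/2 * ((N:ℝ)^(-(d:ℝ)/2) * Real.exp (-c₃ * ‖z‖^2 / N))
            + C₃/2 * ((N:ℝ)^(-(d:ℝ)/2) * Real.exp (-c₃ * ‖z‖^2 / N)) := add_le_add hS1 hS2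
      _ = C₃ * (N:ℝ)^(-(d:ℝ)/2) * Real.exp (-c₃ * ‖z‖^2 / N) := by ring


end
end

section
/- Assume: (Gibbs/quasi-independence) there is K ≥ 1 such that μ(C' ∩ σ^{−n} C'') ≤ K μ(C') μ(C'') for every n ≥ 1, every cylinder C' of length n and every cylinder C''; (bounded distortion) there is R > 0 such that for every N ≥ 1 and every cylinder C of length N, the diameter of τ_N(C) in ℝ^d is at most R; (large deviations) there are C₂, c₂ > 0 with μ(|τ_N| > L) ≤ C₂ e^{−c₂ L²/N} for all N ≥ 1 and L > 0; (anticoncentration) μ(τ_N ∈ 𝒬) ≤ C₂ N^{−d/2} for every N ≥ 1 and every unit cube 𝒬 ⊂ ℝ^d. Then there are constants C₄, c₄ > 0 such that for every s ≥ 1, all integers 0 = n₀ < n₁ < … < n_s, and all unit cubes 𝒬₁, …, 𝒬_s ⊂ ℝ^d centered at z₁, …, z_s (with the convention z₀ = 0), μ(τ_{n_j} ∈ 𝒬_j for j = 1, …, s) ≤ ∏_{j=1}^s [ C₄ (n_j − n_{j−1})^{−d/2} e^{−c₄ |z_j − z_{j−1}|²/(n_j − n_{j−1})} ]. -/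
open MeasureTheory Filter Topology

noncomputable section

namespace Stmt19

/-- box of radius r (sup-norm ball) -/
def box {d : ℕ} (c : EuclideanSpace ℝ (Fin d)) (r : ℝ) : Set (EuclideanSpace ℝ (Fin d)) :=
  {t | ∀ i, |t i - c i| ≤ r}

lemma abs_coord_le_norm {d : ℕ} (x : EuclideanSpace ℝ (Fin d)) (i : Fin d) : |x i| ≤ ‖x‖ := by
  rw [EuclideanSpace.norm_eq, ← Real.sqrt_sq_eq_abs]
  apply Real.sqrt_le_sqrt
  have h1 : x i ^ 2 = ‖x i‖ ^ 2 := by rw [Real.norm_eq_abs, sq_abs]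
  rw [h1]
  exact Finset.single_le_sum (f := fun j => ‖x j‖ ^ 2) (fun j _ => by positivity)
    (Finset.mem_univ i)

lemma norm_le_sqrtd_of_box {d : ℕ} {x c : EuclideanSpace ℝ (Fin d)} {r : ℝ} (hr : 0 ≤ r)
    (h : x ∈ box c r) : ‖x - c‖ ≤ r * Real.sqrt d := by
  rw [EuclideanSpace.norm_eq]
  have hb : ∀ j : Fin d, ‖(x - c) j‖ ^ 2 ≤ r ^ 2 := by
    intro j
    have hj := h j
    have h2 : ‖(x - c) j‖ = |x j - c j| := by simp [PiLp.sub_apply, Real.norm_eq_abs]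
    rw [h2, ← sq_abs r, abs_of_nonneg hr]
    have := abs_nonneg (x j - c j)
    nlinarith
  have step : Real.sqrt (∑ j, ‖(x - c) j‖ ^ 2) ≤ Real.sqrt (∑ _j : Fin d, r ^ 2) :=
    Real.sqrt_le_sqrt (Finset.sum_le_sum (fun j _ => hb j))
  refine step.trans (le_of_eq ?_)
  rw [Finset.sum_const, Finset.card_univ, Fintype.card_fin, nsmul_eq_mul]
  rw [Real.sqrt_mul (by positivity), Real.sqrt_sq hr, mul_comm]

lemma shift_iterate_apply {A : Type*} (p : ℕ) (ω : ℕ → A) (j : ℕ) :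
    (shift^[p] ω) j = ω (j + p) := by
  induction p generalizing ω j with
  | zero => rfl
  | succ p ih =>
    rw [Function.iterate_succ_apply, ih]
    show ω (j + p + 1) = ω (j + (p + 1))
    congr 1

lemma birkhoff_add {A : Type*} {d : ℕ} (τ : (ℕ → A) → EuclideanSpace ℝ (Fin d))
    (a b : ℕ) (ω : ℕ → A) :
    birkhoffShift τ (a + b) ω = birkhoffShift τ a ω + birkhoffShift τ b (shift^[a] ω) := by
  unfold birkhoffShift
  rw [Finset.sum_range_add]
  congr 1
  apply Finset.sum_congr rfl
  intro i _
  rw [← Function.iterate_add_apply, Nat.add_comm a i]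

lemma birkhoff_norm_le {A : Type*} {d : ℕ} {τ : (ℕ → A) → EuclideanSpace ℝ (Fin d)}
    {M : ℝ} (hM : ∀ ω, ‖τ ω‖ ≤ M) (N : ℕ) (ω : ℕ → A) :
    ‖birkhoffShift τ N ω‖ ≤ N * M := by
  calc ‖birkhoffShift τ N ω‖ ≤ ∑ n ∈ Finset.range N, ‖τ (shift^[n] ω)‖ :=
        norm_sum_le _ _
    _ ≤ ∑ _n ∈ Finset.range N, M := Finset.sum_le_sum (fun n _ => hM _)
    _ = N * M := by rw [Finset.sum_const, Finset.card_range, nsmul_eq_mul]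

lemma shift_measurable {A : Type*} [MeasurableSpace A] :
    Measurable (shift : (ℕ → A) → ℕ → A) :=
  measurable_pi_lambda _ (fun n => measurable_pi_apply (n + 1))

lemma birkhoff_measurable {A : Type*} [MeasurableSpace A] {d : ℕ}
    {τ : (ℕ → A) → EuclideanSpace ℝ (Fin d)} (hτ : Measurable τ) (N : ℕ) :
    Measurable (birkhoffShift τ N) := by
  apply Finset.measurable_sum
  intro n _
  exact hτ.comp (shift_measurable.iterate n)

lemma cylinder_measurableSet {A : Type*} [MeasurableSpace A] [DiscreteMeasurableSpace A]
    (n : ℕ) (w : ℕ → A) : MeasurableSet (_root_.cylinder n w) := by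
  have : _root_.cylinder n w = ⋂ (i : ℕ) (_ : i < n), (fun ω : ℕ → A => ω i) ⁻¹' {w i} := by
    ext ω; simp [_root_.cylinder]
  rw [this]
  exact MeasurableSet.iInter fun i => MeasurableSet.iInter fun _ =>
    (measurable_pi_apply i) (MeasurableSet.singleton (w i))

end Stmt19

set_option linter.unusedSectionVars false

namespace Stmt19

open scoped Classical

variable {A : Type*} [Fintype A] [MeasurableSpace A] [DiscreteMeasurableSpace A] [Inhabited A]

def ext (n : ℕ) (u : Fin n → A) : ℕ → A := fun i => if h : i < n then u ⟨i, h⟩ else default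

def cylW (n : ℕ) (u : Fin n → A) : Set (ℕ → A) := _root_.cylinder n (ext n u)

lemma mem_cylW {n : ℕ} {u : Fin n → A} {ω : ℕ → A} :
    ω ∈ cylW n u ↔ ∀ i : Fin n, ω i = u i := by
  constructor
  · intro h i
    have := h i i.isLt
    rwa [ext, dif_pos i.isLt] at this
  · intro h i hi
    rw [ext, dif_pos hi]
    exact h ⟨i, hi⟩

lemma self_mem_cylW {n : ℕ} (ω : ℕ → A) : ω ∈ cylW n (fun i : Fin n => ω i) :=
  mem_cylW.mpr (fun _ => rfl)

lemma cylW_disjoint {n : ℕ} {u u' : Fin n → A} (h : u ≠ u') :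
    Disjoint (cylW n u) (cylW n u') := by
  rw [Set.disjoint_left]
  intro ω hω hω'
  exact h (funext fun i => (mem_cylW.mp hω i).symm.trans (mem_cylW.mp hω' i))

lemma cylW_measurableSet {n : ℕ} (u : Fin n → A) : MeasurableSet (cylW n u) :=
  cylinder_measurableSet n (ext n u)

lemma iUnion_cylW (n : ℕ) : ⋃ u : Fin n → A, cylW n u = Set.univ := by
  apply Set.eq_univ_of_forall
  intro ω
  exact Set.mem_iUnion.mpr ⟨fun i => ω i, self_mem_cylW ω⟩

section Measure

open MeasureTheory

variable (μ : Measure (ℕ → A)) [IsProbabilityMeasure μ]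

lemma sum_toReal_eq_measure_biUnion {n : ℕ} (t : Finset (Fin n → A)) :
    ∑ w ∈ t, (μ (cylW n w)).toReal = (μ (⋃ w ∈ t, cylW n w)).toReal := by
  rw [measure_biUnion_finset ?hd (fun w _ => cylW_measurableSet w)]
  · rw [ENNReal.toReal_sum (fun w _ => measure_ne_top μ _)]
  · intro w _ w' _ hne
    exact cylW_disjoint hne

lemma sum_le_measure {n : ℕ} (t : Finset (Fin n → A)) (Z : Set (ℕ → A))
    (h : ∀ u ∈ t, cylW n u ⊆ Z) :
    ∑ w ∈ t, (μ (cylW n w)).toReal ≤ (μ Z).toReal := by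
  rw [sum_toReal_eq_measure_biUnion]
  exact ENNReal.toReal_mono (measure_ne_top μ _) (measure_mono (Set.iUnion₂_subset h))

lemma sum_le_one {n : ℕ} (t : Finset (Fin n → A)) :
    ∑ w ∈ t, (μ (cylW n w)).toReal ≤ 1 := by
  have := sum_le_measure μ t Set.univ (fun u _ => Set.subset_univ _)
  simpa using this

/-- words whose cylinder meets a given set -/
def meets (n : ℕ) (Eset : Set (ℕ → A)) : Finset (Fin n → A) :=
  Finset.univ.filter (fun u => (cylW n u ∩ Eset).Nonempty)

lemma mem_meets {n : ℕ} {Eset : Set (ℕ → A)} {u : Fin n → A} :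
    u ∈ meets (A := A) n Eset ↔ (cylW n u ∩ Eset).Nonempty := by
  simp [meets]

lemma measure_le_sum_meets (n : ℕ) (Eset : Set (ℕ → A)) :
    (μ Eset).toReal ≤ ∑ u ∈ meets n Eset, (μ (cylW n u)).toReal := by
  rw [sum_toReal_eq_measure_biUnion]
  apply ENNReal.toReal_mono (measure_ne_top μ _)
  apply measure_mono
  intro ω hω
  refine Set.mem_biUnion ?_ (self_mem_cylW (n := n) ω)
  exact mem_meets.mpr ⟨ω, self_mem_cylW ω, hω⟩

def pre (p n : ℕ) (h : p ≤ n) (u : Fin n → A) : Fin p → A :=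
  fun i => u ⟨i, lt_of_lt_of_le i.isLt h⟩

def suf (p n : ℕ) (h : p ≤ n) (u : Fin n → A) : Fin (n - p) → A :=
  fun j => u ⟨p + j, by omega⟩

lemma cylW_subset_pre (p n : ℕ) (h : p ≤ n) (u : Fin n → A) :
    cylW n u ⊆ cylW p (pre p n h u) := by
  intro ω hω
  apply mem_cylW.mpr
  intro i
  exact mem_cylW.mp hω ⟨i, lt_of_lt_of_le i.isLt h⟩

lemma cylW_subset_suf (p n : ℕ) (h : p ≤ n) (u : Fin n → A) :
    cylW n u ⊆ shift^[p] ⁻¹' cylW (n - p) (suf p n h u) := by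
  intro ω hω
  apply mem_cylW.mpr
  intro j
  show (shift^[p] ω) (j : ℕ) = _
  rw [shift_iterate_apply]
  have h2 := mem_cylW.mp hω ⟨p + (j : ℕ), by omega⟩
  rw [show (j : ℕ) + p = p + (j : ℕ) by omega]
  exact h2

lemma pre_suf_inj (p n : ℕ) (h : p ≤ n) {u u' : Fin n → A}
    (h1 : pre p n h u = pre p n h u') (h2 : suf p n h u = suf p n h u') : u = u' := by
  funext i
  rcases lt_or_ge (i : ℕ) p with hip | hip
  · have := congrFun h1 ⟨i, hip⟩
    simpa [pre] using this
  · have hj : (i : ℕ) - p < n - p := by omega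
    have := congrFun h2 ⟨(i : ℕ) - p, hj⟩
    simp only [suf] at this
    have he : (⟨p + ((i : ℕ) - p), by omega⟩ : Fin n) = i := by
      apply Fin.ext; simp; omega
    rwa [he] at this

/-- suffix words compatible with u' and Eset -/
def sufSet (p n : ℕ) (Eset : Set (ℕ → A)) (u' : Fin p → A) : Finset (Fin (n - p) → A) :=
  Finset.univ.filter
    (fun w => (cylW p u' ∩ shift^[p] ⁻¹' cylW (n - p) w ∩ Eset).Nonempty)

lemma mem_sufSet {p n : ℕ} {Eset : Set (ℕ → A)} {u' : Fin p → A} {w : Fin (n - p) → A} :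
    w ∈ sufSet (A := A) p n Eset u' ↔
      (cylW p u' ∩ shift^[p] ⁻¹' cylW (n - p) w ∩ Eset).Nonempty := by
  simp [sufSet]

lemma decompS (K : ℝ) (hK : 1 ≤ K)
    (hGibbs : ∀ n : ℕ, 1 ≤ n → ∀ w : ℕ → A, ∀ n' : ℕ, ∀ w' : ℕ → A,
      μ (_root_.cylinder n w ∩ shift^[n] ⁻¹' _root_.cylinder n' w')
        ≤ ENNReal.ofReal K * μ (_root_.cylinder n w) * μ (_root_.cylinder n' w'))
    (p n : ℕ) (hp : 1 ≤ p) (hpn : p ≤ n) (Eset : Set (ℕ → A)) :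
    ∑ u ∈ meets n Eset, (μ (cylW n u)).toReal
      ≤ ∑ u' ∈ meets p Eset, K * (μ (cylW p u')).toReal *
          (μ (⋃ w ∈ sufSet p n Eset u', cylW (n - p) w)).toReal := by
  have hK0 : (0 : ℝ) ≤ K := le_trans zero_le_one hK
  -- step 1: pointwise Gibbs bound
  have step1 : ∀ u ∈ meets (A := A) n Eset,
      (μ (cylW n u)).toReal ≤
        K * (μ (cylW p (pre p n hpn u))).toReal * (μ (cylW (n - p) (suf p n hpn u))).toReal := by
    intro u _
    have hsub : cylW n u ⊆ cylW p (pre p n hpn u) ∩ shift^[p] ⁻¹' cylW (n - p) (suf p n hpn u) :=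
      Set.subset_inter (cylW_subset_pre p n hpn u) (cylW_subset_suf p n hpn u)
    have hG := hGibbs p hp (ext p (pre p n hpn u)) (n - p) (ext (n - p) (suf p n hpn u))
    have hle : μ (cylW n u) ≤ ENNReal.ofReal K * μ (cylW p (pre p n hpn u)) *
        μ (cylW (n - p) (suf p n hpn u)) := le_trans (measure_mono hsub) hG
    have hfin : ENNReal.ofReal K * μ (cylW p (pre p n hpn u)) *
        μ (cylW (n - p) (suf p n hpn u)) ≠ ⊤ := by
      apply ENNReal.mul_ne_top
      apply ENNReal.mul_ne_top
      · exact ENNReal.ofReal_ne_top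
      · exact measure_ne_top μ _
      · exact measure_ne_top μ _
    have := ENNReal.toReal_mono hfin hle
    rwa [ENNReal.toReal_mul, ENNReal.toReal_mul, ENNReal.toReal_ofReal hK0] at this
  -- step 2: reindex by (pre, suf) pairs
  set G : (Σ _ : Fin p → A, Fin (n - p) → A) → ℝ :=
    fun x => K * (μ (cylW p x.1)).toReal * (μ (cylW (n - p) x.2)).toReal with hG
  set T : Finset (Σ _ : Fin p → A, Fin (n - p) → A) :=
    (meets p Eset).sigma (fun u' => sufSet p n Eset u') with hT
  set f : (Fin n → A) → (Σ _ : Fin p → A, Fin (n - p) → A) :=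
    fun u => ⟨pre p n hpn u, suf p n hpn u⟩ with hf
  have hGnonneg : ∀ x, 0 ≤ G x := by
    intro x
    apply mul_nonneg (mul_nonneg hK0 ENNReal.toReal_nonneg) ENNReal.toReal_nonneg
  have himg : ∀ u ∈ meets (A := A) n Eset, f u ∈ T := by
    intro u hu
    obtain ⟨ω₁, hω₁c, hω₁E⟩ := mem_meets.mp hu
    rw [hT, Finset.mem_sigma]
    constructor
    · exact mem_meets.mpr ⟨ω₁, cylW_subset_pre p n hpn u hω₁c, hω₁E⟩
    · exact mem_sufSet.mpr ⟨ω₁, ⟨cylW_subset_pre p n hpn u hω₁c,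
        cylW_subset_suf p n hpn u hω₁c⟩, hω₁E⟩
  have hinj : ∀ x ∈ meets (A := A) n Eset, ∀ y ∈ meets (A := A) n Eset, f x = f y → x = y := by
    intro x _ y _ hxy
    rw [hf] at hxy
    simp only [Sigma.mk.inj_iff, heq_eq_eq] at hxy
    exact pre_suf_inj p n hpn hxy.1 hxy.2
  calc ∑ u ∈ meets n Eset, (μ (cylW n u)).toReal
      ≤ ∑ u ∈ meets n Eset, G (f u) := Finset.sum_le_sum step1
    _ = ∑ y ∈ (meets n Eset).image f, G y := (Finset.sum_image hinj).symm
    _ ≤ ∑ y ∈ T, G y := by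
        apply Finset.sum_le_sum_of_subset_of_nonneg
        · intro y hy
          obtain ⟨u, hu, rfl⟩ := Finset.mem_image.mp hy
          exact himg u hu
        · intro y _ _
          exact hGnonneg y
    _ = ∑ u' ∈ meets p Eset, ∑ w ∈ sufSet p n Eset u', G ⟨u', w⟩ := Finset.sum_sigma _ _ _
    _ = ∑ u' ∈ meets p Eset, K * (μ (cylW p u')).toReal *
          (μ (⋃ w ∈ sufSet p n Eset u', cylW (n - p) w)).toReal := by
        apply Finset.sum_congr rfl
        intro u' _
        rw [← sum_toReal_eq_measure_biUnion, Finset.mul_sum]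

end Measure
end Stmt19

namespace Stmt19
open MeasureTheory Real

variable {d : ℕ}

lemma box_mono {c : EuclideanSpace ℝ (Fin d)} {r r' : ℝ} (h : r ≤ r') :
    box c r ⊆ box c r' := fun t ht i => le_trans (ht i) h

lemma rpow_half_le {b m : ℕ} (hb : 1 ≤ b) (hm : 1 ≤ m) (h : m ≤ 2 * b) :
    ((b : ℝ)) ^ (-(d : ℝ) / 2) ≤ (2 : ℝ) ^ ((d : ℝ) / 2) * (m : ℝ) ^ (-(d : ℝ) / 2) := by
  have hb0 : (0 : ℝ) < b := by exact_mod_cast hb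
  have hm0 : (0 : ℝ) < m := by exact_mod_cast hm
  have he : (0 : ℝ) ≤ (d : ℝ) / 2 := by positivity
  have h1 : (m : ℝ) ^ ((d : ℝ) / 2) ≤ (2 : ℝ) ^ ((d : ℝ) / 2) * (b : ℝ) ^ ((d : ℝ) / 2) := by
    rw [← Real.mul_rpow (by norm_num) (le_of_lt hb0)]
    apply Real.rpow_le_rpow (le_of_lt hm0) _ he
    exact_mod_cast h
  have hbp : (0 : ℝ) < (b : ℝ) ^ ((d : ℝ) / 2) := Real.rpow_pos_of_pos hb0 _
  have hmp : (0 : ℝ) < (m : ℝ) ^ ((d : ℝ) / 2) := Real.rpow_pos_of_pos hm0 _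
  have h2p : (0 : ℝ) < (2 : ℝ) ^ ((d : ℝ) / 2) := Real.rpow_pos_of_pos (by norm_num) _
  rw [neg_div, Real.rpow_neg (le_of_lt hb0), Real.rpow_neg (le_of_lt hm0)]
  rw [inv_le_iff_one_le_mul₀ hbp]
  have heq : (2:ℝ) ^ ((d:ℝ)/2) * ((m:ℝ)^((d:ℝ)/2))⁻¹ * (b:ℝ)^((d:ℝ)/2)
      = ((2:ℝ)^((d:ℝ)/2) * (b:ℝ)^((d:ℝ)/2)) / ((m:ℝ)^((d:ℝ)/2)) := by
    field_simp
  rw [heq, le_div_iff₀ hmp, one_mul]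
  exact h1

variable {A : Type*} [Fintype A] [MeasurableSpace A] [DiscreteMeasurableSpace A]
variable (μ : Measure (ℕ → A)) [IsProbabilityMeasure μ]
variable (τ : (ℕ → A) → EuclideanSpace ℝ (Fin d))

lemma anti_box (C₂ : ℝ)
    (hanti : ∀ N : ℕ, 1 ≤ N → ∀ a : EuclideanSpace ℝ (Fin d),
      (μ {ω | birkhoffShift τ N ω ∈ unitCubeCorner a}).toReal ≤ C₂ * (N : ℝ) ^ (-(d : ℝ) / 2))
    (r : ℝ) (hr : 0 ≤ r) (m : ℕ) (hm : 1 ≤ m) (c : EuclideanSpace ℝ (Fin d)) :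
    (μ {ω | birkhoffShift τ m ω ∈ box c r}).toReal
      ≤ ((⌈2 * r⌉₊ + 1 : ℕ) : ℝ) ^ d * (C₂ * (m : ℝ) ^ (-(d : ℝ) / 2)) := by
  classical
  set q : ℕ := ⌈2 * r⌉₊ + 1 with hq
  set corner : (Fin d → Fin q) → EuclideanSpace ℝ (Fin d) :=
    fun k => WithLp.toLp 2 (fun i => c i - r + (k i : ℝ) : Fin d → ℝ) with hcorner
  have hcover : box c r ⊆ ⋃ k : Fin d → Fin q, unitCubeCorner (corner k) := by
    intro t ht
    have hchoice : ∀ i : Fin d, ∃ ki : Fin q,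
        c i - r + (ki : ℝ) ≤ t i ∧ t i ≤ c i - r + (ki : ℝ) + 1 := by
      intro i
      have hti := ht i
      have h1 : c i - r ≤ t i := by
        have := abs_le.mp hti; linarith [this.1]
      have h2 : t i ≤ c i + r := by
        have := abs_le.mp hti; linarith [this.2]
      set x : ℝ := t i - (c i - r) with hx
      have hx0 : 0 ≤ x := by linarith
      refine ⟨⟨min ⌊x⌋₊ (q - 1), by omega⟩, ?_, ?_⟩
      · have : ((min ⌊x⌋₊ (q - 1) : ℕ) : ℝ) ≤ x := by
          calc ((min ⌊x⌋₊ (q - 1) : ℕ) : ℝ) ≤ (⌊x⌋₊ : ℝ) := by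
                exact_mod_cast Nat.min_le_left _ _
            _ ≤ x := Nat.floor_le hx0
        show c i - r + ((min ⌊x⌋₊ (q - 1) : ℕ) : ℝ) ≤ t i
        linarith
      · rcases le_or_gt (⌊x⌋₊) (q - 1) with hle | hlt
        · have heq : min ⌊x⌋₊ (q - 1) = ⌊x⌋₊ := min_eq_left hle
          have hfl : x < (⌊x⌋₊ : ℝ) + 1 := Nat.lt_floor_add_one x
          show t i ≤ c i - r + ((min ⌊x⌋₊ (q - 1) : ℕ) : ℝ) + 1
          rw [heq]
          linarith
        · have hmin : min ⌊x⌋₊ (q - 1) = ⌈2 * r⌉₊ := by omega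
          have hxq : x ≤ 2 * r := by linarith
          have h2r : (2 * r : ℝ) ≤ (⌈2 * r⌉₊ : ℕ) := Nat.le_ceil _
          show t i ≤ c i - r + ((min ⌊x⌋₊ (q - 1) : ℕ) : ℝ) + 1
          rw [hmin]
          linarith
    choose k hk using hchoice
    exact Set.mem_iUnion.mpr ⟨k, fun i => ⟨(hk i).1, (hk i).2⟩⟩
  have hsub : {ω | birkhoffShift τ m ω ∈ box c r} ⊆
      ⋃ k : Fin d → Fin q, {ω | birkhoffShift τ m ω ∈ unitCubeCorner (corner k)} := by
    intro ω hω
    obtain ⟨S, ⟨k, rfl⟩, hS⟩ := hcover hω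
    exact Set.mem_iUnion.mpr ⟨k, hS⟩
  calc (μ {ω | birkhoffShift τ m ω ∈ box c r}).toReal
      ≤ (∑ k : Fin d → Fin q, μ {ω | birkhoffShift τ m ω ∈ unitCubeCorner (corner k)}).toReal := by
        apply ENNReal.toReal_mono
        · exact ENNReal.sum_ne_top.mpr (fun k _ => measure_ne_top μ _)
        · exact le_trans (measure_mono hsub) (measure_iUnion_fintype_le μ _)
    _ = ∑ k : Fin d → Fin q, (μ {ω | birkhoffShift τ m ω ∈ unitCubeCorner (corner k)}).toReal :=
        ENNReal.toReal_sum (fun k _ => measure_ne_top μ _)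
    _ ≤ ∑ _k : Fin d → Fin q, C₂ * (m : ℝ) ^ (-(d : ℝ) / 2) :=
        Finset.sum_le_sum (fun k _ => hanti m hm (corner k))
    _ = ((q : ℕ) : ℝ) ^ d * (C₂ * (m : ℝ) ^ (-(d : ℝ) / 2)) := by
        rw [Finset.sum_const, Finset.card_univ, Fintype.card_fun, Fintype.card_fin,
          Fintype.card_fin, nsmul_eq_mul]
        push_cast
        ring

end Stmt19

namespace Stmt19
open MeasureTheory Real

set_option maxHeartbeats 2000000

variable {A : Type*} [Fintype A] [MeasurableSpace A] [DiscreteMeasurableSpace A] [Inhabited A]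

lemma onestep {d : ℕ}
    (μ : Measure (ℕ → A)) [IsProbabilityMeasure μ]
    (τ : (ℕ → A) → EuclideanSpace ℝ (Fin d))
    (M : ℝ) (hM : 1 ≤ M) (hMb : ∀ ω, ‖τ ω‖ ≤ M)
    (K : ℝ) (hK : 1 ≤ K)
    (hGibbs : ∀ n : ℕ, 1 ≤ n → ∀ w : ℕ → A, ∀ n' : ℕ, ∀ w' : ℕ → A,
      μ (_root_.cylinder n w ∩ shift^[n] ⁻¹' _root_.cylinder n' w')
        ≤ ENNReal.ofReal K * μ (_root_.cylinder n w) * μ (_root_.cylinder n' w'))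
    (R : ℝ) (hR : 0 < R)
    (hdist : ∀ N : ℕ, 1 ≤ N → ∀ w : ℕ → A, ∀ ω ∈ _root_.cylinder N w, ∀ ω' ∈ _root_.cylinder N w,
      ‖birkhoffShift τ N ω - birkhoffShift τ N ω'‖ ≤ R)
    (C₂ c₂ : ℝ) (hC₂ : 0 < C₂) (hc₂ : 0 < c₂)
    (hLD : ∀ N : ℕ, 1 ≤ N → ∀ L : ℝ, 0 < L →
      (μ {ω | L < ‖birkhoffShift τ N ω‖}).toReal ≤ C₂ * Real.exp (-c₂ * L ^ 2 / N))
    (hanti : ∀ N : ℕ, 1 ≤ N → ∀ a : EuclideanSpace ℝ (Fin d),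
      (μ {ω | birkhoffShift τ N ω ∈ unitCubeCorner a}).toReal
        ≤ C₂ * (N : ℝ) ^ (-(d : ℝ) / 2)) :
    ∃ Cs : ℝ, 0 < Cs ∧ ∀ m : ℕ, 1 ≤ m → ∀ c : EuclideanSpace ℝ (Fin d),
      (μ {ω | birkhoffShift τ m ω ∈ box c (1 + 2 * R)}).toReal
        ≤ Cs * (m : ℝ) ^ (-(d : ℝ) / 2) * Real.exp (-(c₂ / 100) * ‖c‖ ^ 2 / m) := by
  classical
  set cs := c₂ / 100 with hcs
  have hcs0 : 0 < cs := by positivity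
  set ρ : ℝ := 1 + 2 * R with hρdef
  set ρ' : ℝ := 1 + 4 * R with hρ'def
  have hρ0 : 0 < ρ := by rw [hρdef]; linarith
  have hρ'0 : 0 < ρ' := by rw [hρ'def]; linarith
  have hρρ' : ρ ≤ ρ' := by rw [hρdef, hρ'def]; linarith
  have hρ'ρ : ρ' = ρ + 2 * R := by rw [hρdef, hρ'def]; ring
  set sqd := Real.sqrt d with hsqd
  have hsqd0 : 0 ≤ sqd := Real.sqrt_nonneg _
  set D₀ := 2 * R * sqd with hD₀
  have hD₀0 : 0 ≤ D₀ := by positivity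
  set M₁ := M + ρ' * sqd + 1 with hM₁
  have hM₁1 : 1 ≤ M₁ := by
    have hps : 0 ≤ ρ' * sqd := mul_nonneg hρ'0.le hsqd0
    rw [hM₁]; linarith
  set Λ := ((⌈2 * ρ'⌉₊ + 1 : ℕ) : ℝ) ^ d with hΛ
  have hΛ1 : 1 ≤ Λ := by
    apply one_le_pow₀
    have : (1 : ℕ) ≤ ⌈2 * ρ'⌉₊ + 1 := by omega
    exact_mod_cast this
  set κ := (2 : ℝ) ^ ((d : ℝ) / 2) with hκ
  have hκ1 : 1 ≤ κ := Real.one_le_rpow (by norm_num) (by positivity)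
  have h2d1 : (1 : ℝ) ≤ (2 : ℝ) ^ d := one_le_pow₀ (by norm_num)
  set E₁ := (2 * c₂ * (R + 1) / 5) * M₁ with hE₁
  have hE₁0 : 0 ≤ E₁ := by positivity
  set E₂ := (8 / 3) * cs * D₀ * M₁ with hE₂
  have hE₂0 : 0 ≤ E₂ := by positivity
  set Z := 2 * K * (2 : ℝ) ^ d * κ * Real.exp E₂ with hZ
  have hZ0 : 0 < Z := by positivity
  set X₀ := max (max (M₁ ^ 2) ((20 * (R + 2 + D₀)) ^ 2)) ((25 / (2 * cs)) * Real.log Z) with hX₀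
  have hX₀M₁ : M₁ ^ 2 ≤ X₀ := le_trans (le_max_left _ _) (le_max_left _ _)
  have hX₀R : (20 * (R + 2 + D₀)) ^ 2 ≤ X₀ := le_trans (le_max_right _ _) (le_max_left _ _)
  have hX₀Z : (25 / (2 * cs)) * Real.log Z ≤ X₀ := le_max_right _ _
  have hX₀0 : 0 ≤ X₀ := le_trans (by positivity) hX₀M₁
  set Cs := max (Λ * C₂ * Real.exp (cs * X₀)) (2 * (K * Λ * C₂ ^ 2 * κ * Real.exp E₁)) with hCs
  have hCs1 : Λ * C₂ * Real.exp (cs * X₀) ≤ Cs := le_max_left _ _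
  have hCs2 : 2 * (K * Λ * C₂ ^ 2 * κ * Real.exp E₁) ≤ Cs := le_max_right _ _
  have hCs0 : 0 < Cs := lt_of_lt_of_le (by positivity) hCs1
  refine ⟨Cs, hCs0, ?_⟩
  intro m
  induction m using Nat.strong_induction_on with
  | _ m IH =>
  intro hm c
  have hm0 : (0 : ℝ) < m := by exact_mod_cast hm
  set r := ‖c‖ with hrdef
  have hr0 : 0 ≤ r := norm_nonneg c
  set Eset := {ω | birkhoffShift τ m ω ∈ box c ρ} with hEsetdef
  have hmpow : (0 : ℝ) < (m : ℝ) ^ (-(d : ℝ) / 2) := Real.rpow_pos_of_pos hm0 _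
  rcases lt_or_ge (M₁ * m) r with hcap | hcap
  · -- empty case
    have hempty : Eset = ∅ := by
      apply Set.eq_empty_iff_forall_notMem.mpr
      intro ω hω
      have h1 : ‖birkhoffShift τ m ω - c‖ ≤ ρ * sqd := norm_le_sqrtd_of_box hρ0.le hω
      have h2 : ‖birkhoffShift τ m ω‖ ≤ m * M := birkhoff_norm_le hMb m ω
      have h3 : r ≤ ‖birkhoffShift τ m ω‖ + ‖birkhoffShift τ m ω - c‖ := by
        have h4 := norm_sub_le (birkhoffShift τ m ω) (birkhoffShift τ m ω - c)
        have h5 : birkhoffShift τ m ω - (birkhoffShift τ m ω - c) = c := by abel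
        rw [h5] at h4
        exact h4
      have hm1R : (1 : ℝ) ≤ m := by exact_mod_cast hm
      have : r ≤ M₁ * m := by
        have e1 : ρ * sqd ≤ ρ' * sqd := mul_le_mul_of_nonneg_right hρρ' hsqd0
        have e2 : ρ' * sqd ≤ ρ' * sqd * m :=
          le_mul_of_one_le_right (mul_nonneg hρ'0.le hsqd0) hm1R
        have hMm : M₁ * m = M * m + ρ' * sqd * m + m := by rw [hM₁]; ring
        have hmM : (m : ℝ) * M = M * m := by ring
        linarith only [e1, e2, hMm, hmM, h1, h2, h3, hm0.le]
      linarith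
    rw [hempty]
    simp only [measure_empty, ENNReal.toReal_zero]
    positivity
  rcases le_or_gt (r ^ 2) (X₀ * m) with hreg | hreg
  · -- anticoncentration regime
    have hA := anti_box μ τ C₂ hanti ρ' hρ'0.le m hm c
    have hsub : (μ Eset).toReal ≤ (μ {ω | birkhoffShift τ m ω ∈ box c ρ'}).toReal := by
      apply ENNReal.toReal_mono (measure_ne_top μ _)
      exact measure_mono (fun ω hω => box_mono hρρ' hω)
    have hexp : Real.exp (-(cs * X₀)) ≤ Real.exp (-cs * r ^ 2 / m) := by
      apply Real.exp_le_exp.mpr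
      have h9 : -cs * r ^ 2 / m = -(cs * r ^ 2 / m) := by ring
      rw [h9]
      apply neg_le_neg
      rw [div_le_iff₀ hm0]
      calc cs * r ^ 2 ≤ cs * (X₀ * m) := mul_le_mul_of_nonneg_left hreg hcs0.le
        _ = cs * X₀ * m := by ring
    have hkey : Λ * C₂ ≤ Cs * Real.exp (-cs * r ^ 2 / m) := by
      have h1 : Λ * C₂ = Λ * C₂ * Real.exp (cs * X₀) * Real.exp (-(cs * X₀)) := by
        rw [mul_assoc, ← Real.exp_add, add_neg_cancel, Real.exp_zero, mul_one]
      rw [h1]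
      apply mul_le_mul hCs1 hexp (Real.exp_pos _).le hCs0.le
    calc (μ Eset).toReal ≤ Λ * (C₂ * (m : ℝ) ^ (-(d : ℝ) / 2)) := hsub.trans hA
      _ = (Λ * C₂) * (m : ℝ) ^ (-(d : ℝ) / 2) := by ring
      _ ≤ (Cs * Real.exp (-cs * r ^ 2 / m)) * (m : ℝ) ^ (-(d : ℝ) / 2) :=
          mul_le_mul_of_nonneg_right hkey hmpow.le
      _ = Cs * (m : ℝ) ^ (-(d : ℝ) / 2) * Real.exp (-cs * r ^ 2 / m) := by ring

  · -- main regime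
    have hr1 : 20 * (R + 2 + D₀) < r := by
      have h1 : (20 * (R + 2 + D₀)) ^ 2 < r ^ 2 := by
        have hXm : X₀ ≤ X₀ * m := le_mul_of_one_le_right hX₀0 (by exact_mod_cast hm)
        linarith only [hX₀R, hreg, hXm]
      have h2 : 0 ≤ 20 * (R + 2 + D₀) := by positivity
      nlinarith only [h1, h2, hr0]
    have hm2 : 2 ≤ m := by
      by_contra hcon
      have hm1 : m = 1 := by omega
      rw [hm1] at hcap hreg
      push_cast at hcap hreg
      nlinarith only [hcap, hreg, hX₀M₁, hr0, hM₁1]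
    set a := m / 2 with hadef
    set b := m - a with hbdef
    have ha1 : 1 ≤ a := by omega
    have hb1 : 1 ≤ b := by omega
    have hab : a + b = m := by omega
    have h2a : 2 * a ≤ m := by omega
    have hm2b : m ≤ 2 * b := by omega
    have h4b : 4 * b ≤ 3 * m := by omega
    have hblt : b < m := by omega
    have hbma : m - a = b := rfl
    have ha0 : (0 : ℝ) < a := by exact_mod_cast ha1
    have hb0 : (0 : ℝ) < b := by exact_mod_cast hb1
    have h2aR : 2 * (a : ℝ) ≤ (m : ℝ) := by exact_mod_cast h2a
    have h4bR : 4 * (b : ℝ) ≤ 3 * (m : ℝ) := by exact_mod_cast h4b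
    have hrm : r / m ≤ M₁ := by rw [div_le_iff₀ hm0]; exact hcap
    have hκb : ((b : ℝ)) ^ (-(d : ℝ) / 2) ≤ κ * (m : ℝ) ^ (-(d : ℝ) / 2) := by
      have h := rpow_half_le (d := d) hb1 hm hm2b
      rwa [← hκ] at h
    have hbpow : (0 : ℝ) < (b : ℝ) ^ (-(d : ℝ) / 2) := Real.rpow_pos_of_pos hb0 _
    have hXle : cs * X₀ ≤ cs * r ^ 2 / m := by
      rw [le_div_iff₀ hm0]
      calc cs * X₀ * m = cs * (X₀ * m) := by ring
        _ ≤ cs * r ^ 2 := mul_le_mul_of_nonneg_left hreg.le hcs0.le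
    -- witness values
    set v : (Fin a → A) → EuclideanSpace ℝ (Fin d) := fun u' =>
      if h : (cylW a u' ∩ Eset).Nonempty then birkhoffShift τ a h.choose else 0 with hvdef
    have hvclose : ∀ u' ∈ meets (A := A) a Eset, ∀ ω ∈ cylW a u',
        ‖birkhoffShift τ a ω - v u'‖ ≤ R := by
      intro u' hu' ω hω
      have hne := mem_meets.mp hu'
      have hv : v u' = birkhoffShift τ a hne.choose := by rw [hvdef]; exact dif_pos hne
      rw [hv]
      exact hdist a ha1 (ext a u') ω hω hne.choose hne.choose_spec.1
    -- decomposition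
    have hdec : (μ Eset).toReal ≤ ∑ u' ∈ meets a Eset,
        K * (μ (cylW a u')).toReal * (μ (⋃ w ∈ sufSet a m Eset u', cylW (m - a) w)).toReal :=
      le_trans (measure_le_sum_meets μ m Eset) (decompS μ K hK hGibbs a m ha1 (by omega) Eset)
    -- suffix unions land in boxes
    have hYincl : ∀ u' ∈ meets (A := A) a Eset,
        (⋃ w ∈ sufSet a m Eset u', cylW (m - a) w) ⊆
          {η | birkhoffShift τ b η ∈ box (c - v u') ρ'} := by
      intro u' hu' η hη
      rw [Set.mem_iUnion₂] at hη
      obtain ⟨w, hw, hηw⟩ := hη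
      obtain ⟨ω₁, ⟨hω₁u, hω₁w⟩, hω₁E⟩ := mem_sufSet.mp hw
      show birkhoffShift τ b η ∈ box (c - v u') ρ'
      intro i
      have hd1 : ‖birkhoffShift τ b η - birkhoffShift τ b (shift^[a] ω₁)‖ ≤ R := by
        have h := hdist (m - a) (by omega) (ext (m - a) w) η hηw (shift^[a] ω₁) hω₁w
        rwa [hbma] at h
      have hd2 : birkhoffShift τ b (shift^[a] ω₁)
          = birkhoffShift τ m ω₁ - birkhoffShift τ a ω₁ := by
        have h := birkhoff_add τ a b ω₁
        rw [hab] at h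
        rw [h]; abel
      have hd3 : ‖birkhoffShift τ a ω₁ - v u'‖ ≤ R := hvclose u' hu' ω₁ hω₁u
      have hboxm : birkhoffShift τ m ω₁ ∈ box c ρ := hω₁E
      have e1 : |(birkhoffShift τ b η - birkhoffShift τ b (shift^[a] ω₁)) i| ≤ R :=
        le_trans (abs_coord_le_norm _ i) hd1
      have e3 : |(birkhoffShift τ a ω₁ - v u') i| ≤ R :=
        le_trans (abs_coord_le_norm _ i) hd3
      have e2 : |birkhoffShift τ m ω₁ i - c i| ≤ ρ := hboxm i
      have h2i : birkhoffShift τ b (shift^[a] ω₁) i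
          = birkhoffShift τ m ω₁ i - birkhoffShift τ a ω₁ i := by
        rw [hd2]; simp [PiLp.sub_apply]
      have hx : (birkhoffShift τ b η - birkhoffShift τ b (shift^[a] ω₁)) i
          = birkhoffShift τ b η i - birkhoffShift τ b (shift^[a] ω₁) i := by
        simp [PiLp.sub_apply]
      have hy : (birkhoffShift τ a ω₁ - v u') i
          = birkhoffShift τ a ω₁ i - v u' i := by simp [PiLp.sub_apply]
      have hz : (c - v u') i = c i - v u' i := by simp [PiLp.sub_apply]
      have hsplit : birkhoffShift τ b η i - (c - v u') i =
          (birkhoffShift τ b η - birkhoffShift τ b (shift^[a] ω₁)) i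
            + (birkhoffShift τ m ω₁ i - c i)
            - (birkhoffShift τ a ω₁ - v u') i := by
        rw [hx, hy, hz, h2i]; ring
      rw [hsplit, abs_le]
      have t1 := abs_le.mp e1
      have t2 := abs_le.mp e2
      have t3 := abs_le.mp e3
      constructor
      · linarith only [t1.1, t2.1, t3.2, hρ'ρ]
      · linarith only [t1.2, t2.2, t3.1, hρ'ρ]
    -- anticoncentration bound for every u'
    have hB1 : ∀ u' ∈ meets (A := A) a Eset,
        (μ (⋃ w ∈ sufSet a m Eset u', cylW (m - a) w)).toReal
          ≤ Λ * C₂ * ((b : ℝ)) ^ (-(d : ℝ) / 2) := by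
      intro u' hu'
      have h1 : (μ (⋃ w ∈ sufSet a m Eset u', cylW (m - a) w)).toReal
          ≤ (μ {η | birkhoffShift τ b η ∈ box (c - v u') ρ'}).toReal :=
        ENNReal.toReal_mono (measure_ne_top μ _) (measure_mono (hYincl u' hu'))
      have h2 := anti_box μ τ C₂ hanti ρ' hρ'0.le b hb1 (c - v u')
      rw [← hΛ] at h2
      calc (μ (⋃ w ∈ sufSet a m Eset u', cylW (m - a) w)).toReal
          ≤ (μ {η | birkhoffShift τ b η ∈ box (c - v u') ρ'}).toReal := h1
        _ ≤ Λ * (C₂ * (b : ℝ) ^ (-(d : ℝ) / 2)) := h2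
        _ = Λ * C₂ * (b : ℝ) ^ (-(d : ℝ) / 2) := by ring
    -- IH-based bound for u' with small witness value
    have hB2 : ∀ u' ∈ meets (A := A) a Eset, ‖v u'‖ < r / 10 →
        (μ (⋃ w ∈ sufSet a m Eset u', cylW (m - a) w)).toReal
          ≤ (2 : ℝ) ^ d * Cs * κ * Real.exp E₂ * (m : ℝ) ^ (-(d : ℝ) / 2)
              * Real.exp (-(27 / 25) * cs * r ^ 2 / m) := by
      intro u' hu' hsmall
      set c' := c - v u' with hc'
      have hcv : (9 / 10) * r ≤ ‖c'‖ := by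
        have h := norm_sub_norm_le c (v u')
        rw [← hc'] at h
        linarith only [h, hsmall]
      set ck : (Fin d → Bool) → EuclideanSpace ℝ (Fin d) :=
        fun k => WithLp.toLp 2 (fun i => c' i + (if k i then (2 * R : ℝ) else -(2 * R)) : Fin d → ℝ) with hck
      have hckapp : ∀ k i, ck k i = c' i + (if k i then (2 * R : ℝ) else -(2 * R)) := by
        intro k i; rfl
      have hckcover : box c' ρ' ⊆ ⋃ k : Fin d → Bool, box (ck k) ρ := by
        intro t ht
        refine Set.mem_iUnion.mpr ⟨fun i => decide (c' i ≤ t i), fun i => ?_⟩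
        have hti := abs_le.mp (ht i)
        simp only [hck, PiLp.toLp_apply, decide_eq_true_eq]
        by_cases hci : c' i ≤ t i
        · rw [if_pos hci, abs_le]
          constructor
          · linarith only [hci, hρdef, hR]
          · linarith only [hti.2, hρ'ρ]
        · rw [if_neg hci, abs_le]
          push_neg at hci
          constructor
          · linarith only [hti.1, hρ'ρ]
          · linarith only [hci.le, hρdef, hR]
      have hms : (μ (⋃ w ∈ sufSet a m Eset u', cylW (m - a) w)).toReal
          ≤ ∑ k : Fin d → Bool, (μ {η | birkhoffShift τ b η ∈ box (ck k) ρ}).toReal := by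
        have hsub2 : (⋃ w ∈ sufSet a m Eset u', cylW (m - a) w) ⊆
            ⋃ k : Fin d → Bool, {η | birkhoffShift τ b η ∈ box (ck k) ρ} := by
          intro η hη
          have h1 : birkhoffShift τ b η ∈ box c' ρ' := hYincl u' hu' hη
          obtain ⟨S, ⟨k, rfl⟩, hS⟩ := hckcover h1
          exact Set.mem_iUnion.mpr ⟨k, hS⟩
        calc (μ (⋃ w ∈ sufSet a m Eset u', cylW (m - a) w)).toReal
            ≤ (∑ k : Fin d → Bool,
                μ {η | birkhoffShift τ b η ∈ box (ck k) ρ}).toReal := by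
              apply ENNReal.toReal_mono
              · exact ENNReal.sum_ne_top.mpr (fun k _ => measure_ne_top μ _)
              · exact le_trans (measure_mono hsub2) (measure_iUnion_fintype_le μ _)
          _ = ∑ k : Fin d → Bool, (μ {η | birkhoffShift τ b η ∈ box (ck k) ρ}).toReal :=
              ENNReal.toReal_sum (fun k _ => measure_ne_top μ _)
      have hperk : ∀ k : Fin d → Bool,
          (μ {η | birkhoffShift τ b η ∈ box (ck k) ρ}).toReal
            ≤ Cs * ((b : ℝ)) ^ (-(d : ℝ) / 2)
                * (Real.exp E₂ * Real.exp (-(27 / 25) * cs * r ^ 2 / m)) := by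
        intro k
        have hIH := IH b hblt hb1 (ck k)
        have hδ : ‖ck k - c'‖ ≤ D₀ := by
          have hmem : (ck k - c') ∈ box (0 : EuclideanSpace ℝ (Fin d)) (2 * R) := by
            intro i
            have hsubi : (ck k - c') i = ck k i - c' i := by simp [PiLp.sub_apply]
            have h0i : (0 : EuclideanSpace ℝ (Fin d)) i = 0 := rfl
            rw [hsubi, h0i, hckapp, sub_zero]
            have : c' i + (if k i then (2 * R : ℝ) else -(2 * R)) - c' i
                = (if k i then (2 * R : ℝ) else -(2 * R)) := by ring
            rw [this]
            by_cases hki : k i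
            · rw [if_pos hki, abs_of_nonneg (by linarith only [hR])]
            · rw [if_neg hki, abs_of_nonpos (by linarith only [hR])]
              linarith only []
          have h := norm_le_sqrtd_of_box (by linarith only [hR] : (0 : ℝ) ≤ 2 * R) hmem
          rw [sub_zero] at h
          rw [← hsqd] at h
          rw [hD₀]
          exact h
        have hckn : (9 / 10) * r - D₀ ≤ ‖ck k‖ := by
          have h5 : ‖c'‖ - ‖ck k‖ ≤ ‖ck k - c'‖ := by
            calc ‖c'‖ - ‖ck k‖ ≤ ‖c' - ck k‖ := norm_sub_norm_le _ _
              _ = ‖ck k - c'‖ := norm_sub_rev _ _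
          linarith only [h5, hδ, hcv]
        have hr₁0 : 0 ≤ (9 / 10) * r - D₀ := by linarith only [hr1, hD₀0, hR]
        have hsq : ((9 / 10) * r - D₀) ^ 2 ≤ ‖ck k‖ ^ 2 := by
          nlinarith only [hckn, hr₁0]
        have hQ : (81 / 100) * r ^ 2 - 2 * D₀ * r ≤ ((9 / 10) * r - D₀) ^ 2 := by
          nlinarith only [sq_nonneg D₀, mul_nonneg hD₀0 hr0]
        have hQ0 : 0 ≤ (81 / 100) * r ^ 2 - 2 * D₀ * r := by
          have h20 : 20 * (R + 2 + D₀) * r ≤ r * r := mul_le_mul_of_nonneg_right hr1.le hr0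
          nlinarith only [h20, mul_nonneg hr0 hD₀0, mul_nonneg hr0 hR.le, hr0]
        have hinvb : 4 / (3 * (m : ℝ)) ≤ 1 / (b : ℝ) := by
          rw [div_le_div_iff₀ (by positivity) hb0]
          linarith only [h4bR]
        have hchain : (27 / 25) * cs * r ^ 2 / m - E₂ ≤ cs * ‖ck k‖ ^ 2 / b := by
          have s1 : cs * ((81 / 100) * r ^ 2 - 2 * D₀ * r) / b ≤ cs * ‖ck k‖ ^ 2 / b := by
            gcongr
            exact le_trans hQ hsq
          have s2 : cs * ((81 / 100) * r ^ 2 - 2 * D₀ * r) * (4 / (3 * m))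
              ≤ cs * ((81 / 100) * r ^ 2 - 2 * D₀ * r) / b := by
            have h7 : cs * ((81 / 100) * r ^ 2 - 2 * D₀ * r) / b
                = cs * ((81 / 100) * r ^ 2 - 2 * D₀ * r) * (1 / b) := by ring
            rw [h7]
            exact mul_le_mul_of_nonneg_left hinvb (mul_nonneg hcs0.le hQ0)
          have s3 : cs * ((81 / 100) * r ^ 2 - 2 * D₀ * r) * (4 / (3 * m))
              = (27 / 25) * cs * r ^ 2 / m - (8 / 3) * cs * D₀ * (r / m) := by
            field_simp
            ring
          have s4 : (8 / 3) * cs * D₀ * (r / m) ≤ E₂ := by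
            rw [hE₂]
            exact mul_le_mul_of_nonneg_left hrm (by positivity)
          linarith only [s1, s2, s3, s4]
        have hexpk : Real.exp (-cs * ‖ck k‖ ^ 2 / b)
            ≤ Real.exp E₂ * Real.exp (-(27 / 25) * cs * r ^ 2 / m) := by
          rw [← Real.exp_add]
          apply Real.exp_le_exp.mpr
          have h8 : -cs * ‖ck k‖ ^ 2 / b = -(cs * ‖ck k‖ ^ 2 / b) := by ring
          have h9 : -(27 / 25) * cs * r ^ 2 / m = -((27 / 25) * cs * r ^ 2 / m) := by ring
          rw [h8, h9]
          linarith only [hchain]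
        calc (μ {η | birkhoffShift τ b η ∈ box (ck k) ρ}).toReal
            ≤ Cs * (b : ℝ) ^ (-(d : ℝ) / 2) * Real.exp (-cs * ‖ck k‖ ^ 2 / b) := hIH
          _ ≤ Cs * (b : ℝ) ^ (-(d : ℝ) / 2)
              * (Real.exp E₂ * Real.exp (-(27 / 25) * cs * r ^ 2 / m)) :=
              mul_le_mul_of_nonneg_left hexpk (by positivity)
      calc (μ (⋃ w ∈ sufSet a m Eset u', cylW (m - a) w)).toReal
          ≤ ∑ k : Fin d → Bool, (μ {η | birkhoffShift τ b η ∈ box (ck k) ρ}).toReal := hms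
        _ ≤ ∑ _k : Fin d → Bool, Cs * ((b : ℝ)) ^ (-(d : ℝ) / 2)
              * (Real.exp E₂ * Real.exp (-(27 / 25) * cs * r ^ 2 / m)) :=
            Finset.sum_le_sum (fun k _ => hperk k)
        _ = (2 : ℝ) ^ d * (Cs * ((b : ℝ)) ^ (-(d : ℝ) / 2)
              * (Real.exp E₂ * Real.exp (-(27 / 25) * cs * r ^ 2 / m))) := by
            rw [Finset.sum_const, Finset.card_univ, Fintype.card_fun, Fintype.card_bool,
              Fintype.card_fin, nsmul_eq_mul]
            push_cast
            ring
        _ ≤ (2 : ℝ) ^ d * (Cs * (κ * (m : ℝ) ^ (-(d : ℝ) / 2))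
              * (Real.exp E₂ * Real.exp (-(27 / 25) * cs * r ^ 2 / m))) := by
            apply mul_le_mul_of_nonneg_left _ (by positivity)
            apply mul_le_mul_of_nonneg_right _ (by positivity)
            exact mul_le_mul_of_nonneg_left hκb hCs0.le
        _ = (2 : ℝ) ^ d * Cs * κ * Real.exp E₂ * (m : ℝ) ^ (-(d : ℝ) / 2)
              * Real.exp (-(27 / 25) * cs * r ^ 2 / m) := by ring
    -- split the sum according to the witness value
    have hLDlow : ∑ u' ∈ (meets (A := A) a Eset).filter (fun u' => r / 10 ≤ ‖v u'‖),
        (μ (cylW a u')).toReal ≤ C₂ * Real.exp (-c₂ * (r / 10 - (R + 1)) ^ 2 / a) := by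
      have hL₀pos : 0 < r / 10 - (R + 1) := by linarith only [hr1, hD₀0, hR]
      refine le_trans (sum_le_measure μ _ {ω | r / 10 - (R + 1) < ‖birkhoffShift τ a ω‖} ?_)
        (hLD a ha1 _ hL₀pos)
      intro u' hu' ω hω
      have hu'W := (Finset.mem_filter.mp hu').1
      have hPu' := (Finset.mem_filter.mp hu').2
      have hclose := hvclose u' hu'W ω hω
      have h5 : ‖v u'‖ - ‖birkhoffShift τ a ω‖ ≤ ‖birkhoffShift τ a ω - v u'‖ := by
        have h := norm_sub_norm_le (v u') (birkhoffShift τ a ω)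
        rwa [norm_sub_rev] at h
      show r / 10 - (R + 1) < ‖birkhoffShift τ a ω‖
      linarith only [h5, hclose, hPu']
    -- exponent comparison for the LD part
    have hLexp : Real.exp (-c₂ * (r / 10 - (R + 1)) ^ 2 / a)
        ≤ Real.exp E₁ * (Real.exp (-(cs * X₀)) * Real.exp (-cs * r ^ 2 / m)) := by
      rw [← Real.exp_add, ← Real.exp_add]
      apply Real.exp_le_exp.mpr
      have hQ₂ : r ^ 2 / 100 - (R + 1) * r / 5 ≤ (r / 10 - (R + 1)) ^ 2 := by
        nlinarith only [sq_nonneg (R + 1)]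
      have hQ₂0 : 0 ≤ r ^ 2 / 100 - (R + 1) * r / 5 := by
        have h20 : 20 * (R + 2 + D₀) * r ≤ r * r := mul_le_mul_of_nonneg_right hr1.le hr0
        nlinarith only [h20, mul_nonneg hr0 hD₀0, mul_nonneg hr0 hR.le, hr0]
      have hinva : 2 / (m : ℝ) ≤ 1 / (a : ℝ) := by
        rw [div_le_div_iff₀ hm0 ha0]
        linarith only [h2aR]
      have s1 : c₂ * (r ^ 2 / 100 - (R + 1) * r / 5) / a
          ≤ c₂ * (r / 10 - (R + 1)) ^ 2 / a := by
        gcongr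
      have s2 : c₂ * (r ^ 2 / 100 - (R + 1) * r / 5) * (2 / m)
          ≤ c₂ * (r ^ 2 / 100 - (R + 1) * r / 5) / a := by
        have h7 : c₂ * (r ^ 2 / 100 - (R + 1) * r / 5) / a
            = c₂ * (r ^ 2 / 100 - (R + 1) * r / 5) * (1 / a) := by ring
        rw [h7]
        exact mul_le_mul_of_nonneg_left hinva (mul_nonneg hc₂.le hQ₂0)
      have s3 : c₂ * (r ^ 2 / 100 - (R + 1) * r / 5) * (2 / m)
          = 2 * (cs * r ^ 2 / m) - (2 * c₂ * (R + 1) / 5) * (r / m) := by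
        rw [hcs]
        field_simp
      have s4 : (2 * c₂ * (R + 1) / 5) * (r / m) ≤ E₁ := by
        rw [hE₁]
        exact mul_le_mul_of_nonneg_left hrm (by positivity)
      have s5 : -c₂ * (r / 10 - (R + 1)) ^ 2 / a = -(c₂ * (r / 10 - (R + 1)) ^ 2 / a) := by
        ring
      have s6 : -(cs * X₀) + -cs * r ^ 2 / m = -(cs * X₀ + cs * r ^ 2 / m) := by ring
      rw [s5]
      have key : cs * X₀ + cs * r ^ 2 / m - E₁ ≤ c₂ * (r / 10 - (R + 1)) ^ 2 / a := by
        linarith only [s1, s2, s3, s4, hXle]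
      ring_nf at key ⊢
      linarith only [key]
    -- assemble
    classical
    have hsplitsum :
        ∑ u' ∈ meets (A := A) a Eset,
            K * (μ (cylW a u')).toReal
              * (μ (⋃ w ∈ sufSet a m Eset u', cylW (m - a) w)).toReal
          = (∑ u' ∈ (meets (A := A) a Eset).filter (fun u' => r / 10 ≤ ‖v u'‖),
              K * (μ (cylW a u')).toReal
                * (μ (⋃ w ∈ sufSet a m Eset u', cylW (m - a) w)).toReal)
            + ∑ u' ∈ (meets (A := A) a Eset).filter (fun u' => ¬ (r / 10 ≤ ‖v u'‖)),
                K * (μ (cylW a u')).toReal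
                  * (μ (⋃ w ∈ sufSet a m Eset u', cylW (m - a) w)).toReal :=
      (Finset.sum_filter_add_sum_filter_not _ _ _).symm
    have hbig : ∑ u' ∈ (meets (A := A) a Eset).filter (fun u' => r / 10 ≤ ‖v u'‖),
        K * (μ (cylW a u')).toReal
          * (μ (⋃ w ∈ sufSet a m Eset u', cylW (m - a) w)).toReal
        ≤ K * (Λ * C₂ * κ * (m : ℝ) ^ (-(d : ℝ) / 2))
            * (C₂ * Real.exp (-c₂ * (r / 10 - (R + 1)) ^ 2 / a)) := by
      calc ∑ u' ∈ (meets (A := A) a Eset).filter (fun u' => r / 10 ≤ ‖v u'‖),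
            K * (μ (cylW a u')).toReal
              * (μ (⋃ w ∈ sufSet a m Eset u', cylW (m - a) w)).toReal
          ≤ ∑ u' ∈ (meets (A := A) a Eset).filter (fun u' => r / 10 ≤ ‖v u'‖),
              (K * (Λ * C₂ * κ * (m : ℝ) ^ (-(d : ℝ) / 2))) * (μ (cylW a u')).toReal := by
            apply Finset.sum_le_sum
            intro u' hu'
            have hu'W := (Finset.mem_filter.mp hu').1
            have h1 := hB1 u' hu'W
            have h2 : (μ (⋃ w ∈ sufSet a m Eset u', cylW (m - a) w)).toReal
                ≤ Λ * C₂ * κ * (m : ℝ) ^ (-(d : ℝ) / 2) := by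
              calc (μ (⋃ w ∈ sufSet a m Eset u', cylW (m - a) w)).toReal
                  ≤ Λ * C₂ * ((b : ℝ)) ^ (-(d : ℝ) / 2) := h1
                _ ≤ Λ * C₂ * (κ * (m : ℝ) ^ (-(d : ℝ) / 2)) :=
                    mul_le_mul_of_nonneg_left hκb (by positivity)
                _ = Λ * C₂ * κ * (m : ℝ) ^ (-(d : ℝ) / 2) := by ring
            calc K * (μ (cylW a u')).toReal
                  * (μ (⋃ w ∈ sufSet a m Eset u', cylW (m - a) w)).toReal
                ≤ K * (μ (cylW a u')).toReal * (Λ * C₂ * κ * (m : ℝ) ^ (-(d : ℝ) / 2)) := by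
                  apply mul_le_mul_of_nonneg_left h2 (by positivity)
              _ = (K * (Λ * C₂ * κ * (m : ℝ) ^ (-(d : ℝ) / 2))) * (μ (cylW a u')).toReal := by
                  ring
        _ = (K * (Λ * C₂ * κ * (m : ℝ) ^ (-(d : ℝ) / 2)))
              * ∑ u' ∈ (meets (A := A) a Eset).filter (fun u' => r / 10 ≤ ‖v u'‖),
                  (μ (cylW a u')).toReal := by
            rw [Finset.mul_sum]
        _ ≤ (K * (Λ * C₂ * κ * (m : ℝ) ^ (-(d : ℝ) / 2)))
              * (C₂ * Real.exp (-c₂ * (r / 10 - (R + 1)) ^ 2 / a)) :=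
            mul_le_mul_of_nonneg_left hLDlow (by positivity)
    have hsmallpart : ∑ u' ∈ (meets (A := A) a Eset).filter (fun u' => ¬ (r / 10 ≤ ‖v u'‖)),
        K * (μ (cylW a u')).toReal
          * (μ (⋃ w ∈ sufSet a m Eset u', cylW (m - a) w)).toReal
        ≤ K * ((2 : ℝ) ^ d * Cs * κ * Real.exp E₂ * (m : ℝ) ^ (-(d : ℝ) / 2)
            * Real.exp (-(27 / 25) * cs * r ^ 2 / m)) := by
      set BS := (2 : ℝ) ^ d * Cs * κ * Real.exp E₂ * (m : ℝ) ^ (-(d : ℝ) / 2)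
          * Real.exp (-(27 / 25) * cs * r ^ 2 / m) with hBS
      have hBS0 : 0 ≤ BS := by rw [hBS]; positivity
      calc ∑ u' ∈ (meets (A := A) a Eset).filter (fun u' => ¬ (r / 10 ≤ ‖v u'‖)),
            K * (μ (cylW a u')).toReal
              * (μ (⋃ w ∈ sufSet a m Eset u', cylW (m - a) w)).toReal
          ≤ ∑ u' ∈ (meets (A := A) a Eset).filter (fun u' => ¬ (r / 10 ≤ ‖v u'‖)),
              (K * BS) * (μ (cylW a u')).toReal := by
            apply Finset.sum_le_sum
            intro u' hu'
            have hu'W := (Finset.mem_filter.mp hu').1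
            have hnP := (Finset.mem_filter.mp hu').2
            have hsmall : ‖v u'‖ < r / 10 := lt_of_not_ge hnP
            have h1 := hB2 u' hu'W hsmall
            calc K * (μ (cylW a u')).toReal
                  * (μ (⋃ w ∈ sufSet a m Eset u', cylW (m - a) w)).toReal
                ≤ K * (μ (cylW a u')).toReal * BS := by
                  apply mul_le_mul_of_nonneg_left _ (by positivity)
                  rw [hBS]
                  exact h1
              _ = (K * BS) * (μ (cylW a u')).toReal := by ring
        _ = (K * BS) * ∑ u' ∈ (meets (A := A) a Eset).filter (fun u' => ¬ (r / 10 ≤ ‖v u'‖)),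
              (μ (cylW a u')).toReal := by rw [Finset.mul_sum]
        _ ≤ (K * BS) * 1 := by
            apply mul_le_mul_of_nonneg_left (sum_le_one μ _) (by positivity)
        _ = K * BS := mul_one _
    -- final combination
    have hT1 : K * (Λ * C₂ * κ * (m : ℝ) ^ (-(d : ℝ) / 2))
        * (C₂ * Real.exp (-c₂ * (r / 10 - (R + 1)) ^ 2 / a))
        ≤ (Cs / 2) * ((m : ℝ) ^ (-(d : ℝ) / 2) * Real.exp (-cs * r ^ 2 / m)) := by
      have hx2 : Real.exp (-(cs * X₀)) ≤ 1 := by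
        rw [Real.exp_le_one_iff]
        have : 0 ≤ cs * X₀ := mul_nonneg hcs0.le hX₀0
        linarith only [this]
      calc K * (Λ * C₂ * κ * (m : ℝ) ^ (-(d : ℝ) / 2))
            * (C₂ * Real.exp (-c₂ * (r / 10 - (R + 1)) ^ 2 / a))
          ≤ K * (Λ * C₂ * κ * (m : ℝ) ^ (-(d : ℝ) / 2))
            * (C₂ * (Real.exp E₁ * (Real.exp (-(cs * X₀)) * Real.exp (-cs * r ^ 2 / m)))) := by
            apply mul_le_mul_of_nonneg_left _ (by positivity)
            exact mul_le_mul_of_nonneg_left hLexp hC₂.le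
        _ = (K * Λ * C₂ ^ 2 * κ * Real.exp E₁) * Real.exp (-(cs * X₀))
              * ((m : ℝ) ^ (-(d : ℝ) / 2) * Real.exp (-cs * r ^ 2 / m)) := by ring
        _ ≤ (K * Λ * C₂ ^ 2 * κ * Real.exp E₁) * 1
              * ((m : ℝ) ^ (-(d : ℝ) / 2) * Real.exp (-cs * r ^ 2 / m)) := by
            apply mul_le_mul_of_nonneg_right _ (by positivity)
            exact mul_le_mul_of_nonneg_left hx2 (by positivity)
        _ ≤ (Cs / 2) * ((m : ℝ) ^ (-(d : ℝ) / 2) * Real.exp (-cs * r ^ 2 / m)) := by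
            apply mul_le_mul_of_nonneg_right _ (by positivity)
            rw [mul_one]
            linarith only [hCs2]
    have hT2 : K * ((2 : ℝ) ^ d * Cs * κ * Real.exp E₂ * (m : ℝ) ^ (-(d : ℝ) / 2)
          * Real.exp (-(27 / 25) * cs * r ^ 2 / m))
        ≤ (Cs / 2) * ((m : ℝ) ^ (-(d : ℝ) / 2) * Real.exp (-cs * r ^ 2 / m)) := by
      have hx3 : Real.exp (-(27 / 25) * cs * r ^ 2 / m)
          ≤ Real.exp (-((2 / 25) * (cs * X₀))) * Real.exp (-cs * r ^ 2 / m) := by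
        rw [← Real.exp_add]
        apply Real.exp_le_exp.mpr
        have h8 : -(27 / 25) * cs * r ^ 2 / m
            = -((2 / 25) * (cs * r ^ 2 / m)) + -(cs * r ^ 2 / m) := by ring
        have h9 : -cs * r ^ 2 / m = -(cs * r ^ 2 / m) := by ring
        rw [h8, h9]
        have h10 : (2 / 25) * (cs * X₀) ≤ (2 / 25) * (cs * r ^ 2 / m) := by
          linarith only [hXle]
        linarith only [h10]
      have hlog : Real.log Z ≤ (2 / 25) * (cs * X₀) := by
        have h6 : (2 / 25) * cs * ((25 / (2 * cs)) * Real.log Z) ≤ (2 / 25) * cs * X₀ :=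
          mul_le_mul_of_nonneg_left hX₀Z (by positivity)
        have h7 : (2 / 25) * cs * ((25 / (2 * cs)) * Real.log Z) = Real.log Z := by
          field_simp
        have h11 : (2 / 25) * cs * X₀ = (2 / 25) * (cs * X₀) := by ring
        linarith only [h6, h7, h11]
      have h8 : Z ≤ Real.exp ((2 / 25) * (cs * X₀)) := by
        rw [← Real.exp_log hZ0]
        exact Real.exp_le_exp.mpr hlog
      have h9 : Real.exp (-((2 / 25) * (cs * X₀))) ≤ 1 / Z := by
        rw [Real.exp_neg, one_div]
        exact inv_anti₀ hZ0 h8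
      have h12 : K * ((2 : ℝ) ^ d * κ * Real.exp E₂) * Real.exp (-((2 / 25) * (cs * X₀)))
          ≤ 1 / 2 := by
        calc K * ((2 : ℝ) ^ d * κ * Real.exp E₂) * Real.exp (-((2 / 25) * (cs * X₀)))
            ≤ K * ((2 : ℝ) ^ d * κ * Real.exp E₂) * (1 / Z) := by
              apply mul_le_mul_of_nonneg_left h9 (by positivity)
          _ = 1 / 2 := by
              rw [hZ]
              have hKne : K ≠ 0 := by positivity
              have h2dne : ((2 : ℝ) ^ d) ≠ 0 := by positivity
              have hκne : κ ≠ 0 := by positivity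
              have hene : Real.exp E₂ ≠ 0 := (Real.exp_pos _).ne'
              field_simp
      calc K * ((2 : ℝ) ^ d * Cs * κ * Real.exp E₂ * (m : ℝ) ^ (-(d : ℝ) / 2)
            * Real.exp (-(27 / 25) * cs * r ^ 2 / m))
          ≤ K * ((2 : ℝ) ^ d * Cs * κ * Real.exp E₂ * (m : ℝ) ^ (-(d : ℝ) / 2)
            * (Real.exp (-((2 / 25) * (cs * X₀))) * Real.exp (-cs * r ^ 2 / m))) := by
            have hK0 : (0 : ℝ) ≤ K := le_trans zero_le_one hK
            apply mul_le_mul_of_nonneg_left _ hK0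
            apply mul_le_mul_of_nonneg_left hx3 (by positivity)
        _ = (K * ((2 : ℝ) ^ d * κ * Real.exp E₂) * Real.exp (-((2 / 25) * (cs * X₀)))) * Cs
              * ((m : ℝ) ^ (-(d : ℝ) / 2) * Real.exp (-cs * r ^ 2 / m)) := by ring
        _ ≤ (1 / 2) * Cs * ((m : ℝ) ^ (-(d : ℝ) / 2) * Real.exp (-cs * r ^ 2 / m)) := by
            apply mul_le_mul_of_nonneg_right _ (by positivity)
            exact mul_le_mul_of_nonneg_right h12 hCs0.le
        _ = (Cs / 2) * ((m : ℝ) ^ (-(d : ℝ) / 2) * Real.exp (-cs * r ^ 2 / m)) := by ring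
    calc (μ Eset).toReal
        ≤ ∑ u' ∈ meets a Eset, K * (μ (cylW a u')).toReal
            * (μ (⋃ w ∈ sufSet a m Eset u', cylW (m - a) w)).toReal := hdec
      _ ≤ (Cs / 2) * ((m : ℝ) ^ (-(d : ℝ) / 2) * Real.exp (-cs * r ^ 2 / m))
            + (Cs / 2) * ((m : ℝ) ^ (-(d : ℝ) / 2) * Real.exp (-cs * r ^ 2 / m)) := by
          rw [hsplitsum]
          exact add_le_add (le_trans hbig hT1) (le_trans hsmallpart hT2)
      _ = Cs * (m : ℝ) ^ (-(d : ℝ) / 2) * Real.exp (-cs * r ^ 2 / m) := by ring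


end Stmt19

set_option maxHeartbeats 2000000 in
/-- Lemma A.4 of the paper: under the Gibbs (quasi-independence) property, bounded
distortion on cylinders, subgaussian large deviations and `N^{-d/2}` anticoncentration,
the joint anticoncentration large deviation bound of any order `s` holds:
`μ(τ_{n_j} ∈ 𝒬_j, j ≤ s) ≤ ∏_j C₄ (n_j − n_{j−1})^{−d/2} e^{−c₄|z_j − z_{j−1}|²/(n_j − n_{j−1})}`. -/
theorem stmt_19
    {A : Type*} [Fintype A] [MeasurableSpace A] [DiscreteMeasurableSpace A]
    (μ : Measure (ℕ → A)) [IsProbabilityMeasure μ]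
    (hshift : MeasurePreserving (shift : (ℕ → A) → ℕ → A) μ μ)
    {d : ℕ}
    (τ : (ℕ → A) → EuclideanSpace ℝ (Fin d)) (hτm : Measurable τ)
    (hτb : ∃ M, ∀ ω, ‖τ ω‖ ≤ M)
    (K : ℝ) (hK : 1 ≤ K)
    -- Gibbs / quasi-independence property
    (hGibbs : ∀ n : ℕ, 1 ≤ n → ∀ w : ℕ → A, ∀ n' : ℕ, ∀ w' : ℕ → A,
      μ (cylinder n w ∩ shift^[n] ⁻¹' cylinder n' w')
        ≤ ENNReal.ofReal K * μ (cylinder n w) * μ (cylinder n' w'))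
    (R : ℝ) (hR : 0 < R)
    -- bounded distortion: τ_N has diameter ≤ R on length-N cylinders
    (hdist : ∀ N : ℕ, 1 ≤ N → ∀ w : ℕ → A, ∀ ω ∈ cylinder N w, ∀ ω' ∈ cylinder N w,
      ‖birkhoffShift τ N ω - birkhoffShift τ N ω'‖ ≤ R)
    (C₂ c₂ : ℝ) (hC₂ : 0 < C₂) (hc₂ : 0 < c₂)
    -- large deviations
    (hLD : ∀ N : ℕ, 1 ≤ N → ∀ L : ℝ, 0 < L →
      (μ {ω | L < ‖birkhoffShift τ N ω‖}).toReal ≤ C₂ * Real.exp (-c₂ * L ^ 2 / N))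
    -- anticoncentration
    (hanti : ∀ N : ℕ, 1 ≤ N → ∀ a : EuclideanSpace ℝ (Fin d),
      (μ {ω | birkhoffShift τ N ω ∈ unitCubeCorner a}).toReal
        ≤ C₂ * (N : ℝ) ^ (-(d : ℝ) / 2)) :
    ∃ C₄ : ℝ, 0 < C₄ ∧ ∃ c₄ : ℝ, 0 < c₄ ∧
      ∀ s : ℕ, 1 ≤ s →
      ∀ n : ℕ → ℕ, n 0 = 0 → (∀ j : ℕ, j < s → n j < n (j + 1)) →
      ∀ z : ℕ → EuclideanSpace ℝ (Fin d), z 0 = 0 →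
        (μ {ω | ∀ j ∈ Finset.Icc 1 s, birkhoffShift τ (n j) ω ∈ unitCubeAt (z j)}).toReal
          ≤ ∏ j ∈ Finset.Icc 1 s,
              C₄ * ((n j - n (j - 1) : ℕ) : ℝ) ^ (-(d : ℝ) / 2) *
                Real.exp (-c₄ * ‖z j - z (j - 1)‖ ^ 2 / ((n j - n (j - 1) : ℕ) : ℝ)) := by
  classical
  -- A is nonempty
  have hA : Nonempty A := by
    by_contra h
    rw [not_nonempty_iff] at h
    haveI : IsEmpty (ℕ → A) := ⟨fun f => h.false (f 0)⟩
    have h1 : (Set.univ : Set (ℕ → A)) = ∅ := Set.eq_empty_of_isEmpty _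
    have h2 : μ Set.univ = 1 := MeasureTheory.measure_univ
    rw [h1, MeasureTheory.measure_empty] at h2
    exact zero_ne_one h2
  haveI : Inhabited A := Classical.inhabited_of_nonempty hA
  obtain ⟨M₀, hM₀⟩ := hτb
  have hM1 : 1 ≤ max M₀ 1 := le_max_right _ _
  have hMb : ∀ ω, ‖τ ω‖ ≤ max M₀ 1 := fun ω => le_trans (hM₀ ω) (le_max_left _ _)
  obtain ⟨Cs, hCs0, honestep⟩ :=
    Stmt19.onestep μ τ (max M₀ 1) hM1 hMb K hK hGibbs R hR hdist C₂ c₂ hC₂ hc₂ hLD hanti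
  have hK0 : (0 : ℝ) < K := lt_of_lt_of_le one_pos hK
  refine ⟨K * Cs, mul_pos hK0 hCs0, c₂ / 100, by positivity, ?_⟩
  intro s hs n hn0 hmono z hz0
  set Eset := {ω : ℕ → A | ∀ j ∈ Finset.Icc 1 s, birkhoffShift τ (n j) ω ∈ unitCubeAt (z j)}
    with hEset
  -- growth of n
  have hnk : ∀ k, k ≤ s → k ≤ n k := by
    intro k
    induction k with
    | zero => intro _; omega
    | succ j ih =>
      intro hj
      have h1 := ih (by omega)
      have h2 := hmono j (by omega)
      omega
  -- the one-step factors
  set U : ℕ → ℝ := fun k =>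
    (μ {η | birkhoffShift τ (n k - n (k - 1)) η ∈
        Stmt19.box (z k - z (k - 1)) (1 + 2 * R)}).toReal with hU
  have hU0 : ∀ k, 0 ≤ U k := fun k => ENNReal.toReal_nonneg
  -- cube membership gives coordinatewise bounds
  have hcube : ∀ (j : ℕ) (t : EuclideanSpace ℝ (Fin d)), t ∈ unitCubeAt (z j) →
      ∀ i, |t i - z j i| ≤ 1 / 2 := by
    intro j t ht i
    have h := ht i
    rw [abs_le]
    constructor <;> linarith [h.1, h.2]
  -- main chain bound
  have chain : ∀ k, 1 ≤ k → k ≤ s →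
      ∑ u ∈ Stmt19.meets (n k) Eset, (μ (Stmt19.cylW (n k) u)).toReal
        ≤ ∏ j ∈ Finset.Icc 1 k, (K * U j) := by
    intro k hk1
    induction k, hk1 using Nat.le_induction with
    | base =>
      intro hs1
      have hn1 : 1 ≤ n 1 := hnk 1 hs1
      have hsum : ∑ u ∈ Stmt19.meets (n 1) Eset, (μ (Stmt19.cylW (n 1) u)).toReal ≤ U 1 := by
        rw [hU]
        apply Stmt19.sum_le_measure
        intro u hu ω hω
        obtain ⟨ω₁, hω₁c, hω₁E⟩ := Stmt19.mem_meets.mp hu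
        show birkhoffShift τ (n 1 - n 0) ω ∈ Stmt19.box (z 1 - z 0) (1 + 2 * R)
        have hn10 : n 1 - n 0 = n 1 := by omega
        rw [hn10]
        intro i
        have hd1 : ‖birkhoffShift τ (n 1) ω - birkhoffShift τ (n 1) ω₁‖ ≤ R :=
          hdist (n 1) hn1 (Stmt19.ext (n 1) u) ω hω ω₁ hω₁c
        have e1 : |(birkhoffShift τ (n 1) ω - birkhoffShift τ (n 1) ω₁) i| ≤ R :=
          le_trans (Stmt19.abs_coord_le_norm _ i) hd1
        have hmem : birkhoffShift τ (n 1) ω₁ ∈ unitCubeAt (z 1) :=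
          hω₁E 1 (Finset.mem_Icc.mpr ⟨le_refl 1, hs1⟩)
        have e2 : |birkhoffShift τ (n 1) ω₁ i - z 1 i| ≤ 1 / 2 := hcube 1 _ hmem i
        have hx : (birkhoffShift τ (n 1) ω - birkhoffShift τ (n 1) ω₁) i
            = birkhoffShift τ (n 1) ω i - birkhoffShift τ (n 1) ω₁ i := by
          simp [PiLp.sub_apply]
        have hz : (z 1 - z 0) i = z 1 i - 0 := by
          rw [hz0]; simp [PiLp.sub_apply]
        have hsplit : birkhoffShift τ (n 1) ω i - (z 1 - z 0) i
            = (birkhoffShift τ (n 1) ω - birkhoffShift τ (n 1) ω₁) i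
              + (birkhoffShift τ (n 1) ω₁ i - z 1 i) + z 1 i - z 1 i + 0 := by
          rw [hx, hz]; ring
        rw [hsplit, abs_le]
        have t1 := abs_le.mp e1
        have t2 := abs_le.mp e2
        constructor
        · linarith only [t1.1, t2.1, hR]
        · linarith only [t1.2, t2.2, hR]
      rw [Finset.Icc_self, Finset.prod_singleton]
      calc ∑ u ∈ Stmt19.meets (n 1) Eset, (μ (Stmt19.cylW (n 1) u)).toReal
          ≤ U 1 := hsum
        _ ≤ K * U 1 := le_mul_of_one_le_left (hU0 1) hK
    | succ k hk1 ih =>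
      intro hks
      have hkk : k ≤ s := by omega
      have hnklt : n k < n (k + 1) := hmono k (by omega)
      have hnk1 : 1 ≤ n k := le_trans hk1 (hnk k hkk)
      have hq1 : 1 ≤ n (k + 1) - n k := by omega
      have hdec := Stmt19.decompS μ K hK hGibbs (n k) (n (k + 1)) hnk1 hnklt.le Eset
      have hYU : ∀ u' ∈ Stmt19.meets (A := A) (n k) Eset,
          (μ (⋃ w ∈ Stmt19.sufSet (n k) (n (k + 1)) Eset u',
              Stmt19.cylW (n (k + 1) - n k) w)).toReal ≤ U (k + 1) := by
        intro u' hu'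
        rw [hU]
        apply ENNReal.toReal_mono (MeasureTheory.measure_ne_top μ _)
        apply MeasureTheory.measure_mono
        intro η hη
        rw [Set.mem_iUnion₂] at hη
        obtain ⟨w, hw, hηw⟩ := hη
        obtain ⟨ω₁, ⟨hω₁u, hω₁w⟩, hω₁E⟩ := Stmt19.mem_sufSet.mp hw
        show birkhoffShift τ (n (k + 1) - n ((k + 1) - 1)) η ∈
          Stmt19.box (z (k + 1) - z ((k + 1) - 1)) (1 + 2 * R)
        have hidx : (k + 1) - 1 = k := rfl
        rw [hidx]
        intro i
        have hd1 : ‖birkhoffShift τ (n (k + 1) - n k) η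
            - birkhoffShift τ (n (k + 1) - n k) (shift^[n k] ω₁)‖ ≤ R :=
          hdist (n (k + 1) - n k) hq1 (Stmt19.ext (n (k + 1) - n k) w) η hηw
            (shift^[n k] ω₁) hω₁w
        have hd2 : birkhoffShift τ (n (k + 1) - n k) (shift^[n k] ω₁)
            = birkhoffShift τ (n (k + 1)) ω₁ - birkhoffShift τ (n k) ω₁ := by
          have h := Stmt19.birkhoff_add τ (n k) (n (k + 1) - n k) ω₁
          rw [show n k + (n (k + 1) - n k) = n (k + 1) by omega] at h
          rw [h]; abel
        have hm1 : birkhoffShift τ (n (k + 1)) ω₁ ∈ unitCubeAt (z (k + 1)) :=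
          hω₁E (k + 1) (Finset.mem_Icc.mpr ⟨by omega, hks⟩)
        have hm2 : birkhoffShift τ (n k) ω₁ ∈ unitCubeAt (z k) :=
          hω₁E k (Finset.mem_Icc.mpr ⟨hk1, hkk⟩)
        have e1 : |(birkhoffShift τ (n (k + 1) - n k) η
            - birkhoffShift τ (n (k + 1) - n k) (shift^[n k] ω₁)) i| ≤ R :=
          le_trans (Stmt19.abs_coord_le_norm _ i) hd1
        have e2 : |birkhoffShift τ (n (k + 1)) ω₁ i - z (k + 1) i| ≤ 1 / 2 :=
          hcube (k + 1) _ hm1 i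
        have e3 : |birkhoffShift τ (n k) ω₁ i - z k i| ≤ 1 / 2 := hcube k _ hm2 i
        have hx : (birkhoffShift τ (n (k + 1) - n k) η
            - birkhoffShift τ (n (k + 1) - n k) (shift^[n k] ω₁)) i
            = birkhoffShift τ (n (k + 1) - n k) η i
              - birkhoffShift τ (n (k + 1) - n k) (shift^[n k] ω₁) i := by
          simp [PiLp.sub_apply]
        have h2i : birkhoffShift τ (n (k + 1) - n k) (shift^[n k] ω₁) i
            = birkhoffShift τ (n (k + 1)) ω₁ i - birkhoffShift τ (n k) ω₁ i := by
          rw [hd2]; simp [PiLp.sub_apply]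
        have hz2 : (z (k + 1) - z k) i = z (k + 1) i - z k i := by simp [PiLp.sub_apply]
        have hsplit : birkhoffShift τ (n (k + 1) - n k) η i - (z (k + 1) - z k) i
            = (birkhoffShift τ (n (k + 1) - n k) η
                - birkhoffShift τ (n (k + 1) - n k) (shift^[n k] ω₁)) i
              + (birkhoffShift τ (n (k + 1)) ω₁ i - z (k + 1) i)
              - (birkhoffShift τ (n k) ω₁ i - z k i) := by
          rw [hx, hz2, h2i]; ring
        rw [hsplit, abs_le]
        have t1 := abs_le.mp e1
        have t2 := abs_le.mp e2
        have t3 := abs_le.mp e3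
        constructor
        · linarith only [t1.1, t2.1, t3.2, hR]
        · linarith only [t1.2, t2.2, t3.1, hR]
      calc ∑ u ∈ Stmt19.meets (n (k + 1)) Eset, (μ (Stmt19.cylW (n (k + 1)) u)).toReal
          ≤ ∑ u' ∈ Stmt19.meets (n k) Eset,
              K * (μ (Stmt19.cylW (n k) u')).toReal *
                (μ (⋃ w ∈ Stmt19.sufSet (n k) (n (k + 1)) Eset u',
                    Stmt19.cylW (n (k + 1) - n k) w)).toReal := hdec
        _ ≤ ∑ u' ∈ Stmt19.meets (n k) Eset,
              (K * U (k + 1)) * (μ (Stmt19.cylW (n k) u')).toReal := by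
            apply Finset.sum_le_sum
            intro u' hu'
            calc K * (μ (Stmt19.cylW (n k) u')).toReal *
                  (μ (⋃ w ∈ Stmt19.sufSet (n k) (n (k + 1)) Eset u',
                      Stmt19.cylW (n (k + 1) - n k) w)).toReal
                ≤ K * (μ (Stmt19.cylW (n k) u')).toReal * U (k + 1) := by
                  apply mul_le_mul_of_nonneg_left (hYU u' hu')
                  exact mul_nonneg hK0.le ENNReal.toReal_nonneg
              _ = (K * U (k + 1)) * (μ (Stmt19.cylW (n k) u')).toReal := by ring
        _ = (K * U (k + 1)) * ∑ u' ∈ Stmt19.meets (n k) Eset,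
              (μ (Stmt19.cylW (n k) u')).toReal := by rw [Finset.mul_sum]
        _ ≤ (K * U (k + 1)) * ∏ j ∈ Finset.Icc 1 k, (K * U j) := by
            apply mul_le_mul_of_nonneg_left (ih hkk)
            exact mul_nonneg hK0.le (hU0 _)
        _ = ∏ j ∈ Finset.Icc 1 (k + 1), (K * U j) := by
            rw [Finset.prod_Icc_succ_top (by omega : 1 ≤ k + 1)]
            ring
  -- conclude
  have hfinal : (μ Eset).toReal ≤ ∏ j ∈ Finset.Icc 1 s, (K * U j) :=
    le_trans (Stmt19.measure_le_sum_meets μ (n s) Eset) (chain s hs (le_refl s))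
  apply le_trans hfinal
  apply Finset.prod_le_prod
  · intro j _
    exact mul_nonneg hK0.le (hU0 j)
  · intro j hj
    rw [Finset.mem_Icc] at hj
    have hj1 : 1 ≤ j := hj.1
    have hjs : j ≤ s := hj.2
    have hmj : 1 ≤ n j - n (j - 1) := by
      have := hmono (j - 1) (by omega)
      rw [show j - 1 + 1 = j by omega] at this
      omega
    have hone := honestep (n j - n (j - 1)) hmj (z j - z (j - 1))
    calc K * U j ≤ K * (Cs * ((n j - n (j - 1) : ℕ) : ℝ) ^ (-(d : ℝ) / 2) *
          Real.exp (-(c₂ / 100) * ‖z j - z (j - 1)‖ ^ 2 / ((n j - n (j - 1) : ℕ) : ℝ))) := by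
          apply mul_le_mul_of_nonneg_left _ hK0.le
          rw [hU]
          exact hone
      _ = K * Cs * ((n j - n (j - 1) : ℕ) : ℝ) ^ (-(d : ℝ) / 2) *
          Real.exp (-(c₂ / 100) * ‖z j - z (j - 1)‖ ^ 2 / ((n j - n (j - 1) : ℕ) : ℝ)) := by
          ring

end
end
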